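/- arXiv:2312.03218 — 9 statements merged into one kernel-verified Lean document; each statement's English description precedes it below -/
import Mathlib

section
/- Let E be a real inner product space, let u and v be unit vectors in E, and let P be the orthogonal projection of E onto a complete subspace, with Pv ≠ 0. Then ⟨Pv/‖Pv‖, u⟩² − ⟨v, u⟩² ≤ 2(1 − ‖Pv‖) + 2‖v − Pv‖. -/
open scoped RealInnerProductSpace

/-- Let `E` be a real inner product space, let `u` and `v` be unit vectors in
`E`, and let `P` be the orthogonal projection of `E` onto a complete subspace `K`, with
`Pv ≠ 0`. Then `⟨Pv/‖Pv‖, u⟩² − ⟨v, u⟩² ≤ 2(1 − ‖Pv‖) + 2‖v − Pv‖`. -/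
theorem stmt_3 {E : Type*} [NormedAddCommGroup E] [InnerProductSpace ℝ E]
    (u v : E) (hu : ‖u‖ = 1) (hv : ‖v‖ = 1)
    (K : Submodule ℝ E) [CompleteSpace K]
    (hPv : (K.orthogonalProjectionOnto v : E) ≠ 0) :
    ⟪‖(K.orthogonalProjectionOnto v : E)‖⁻¹ • (K.orthogonalProjectionOnto v : E), u⟫ ^ 2
        - ⟪v, u⟫ ^ 2
      ≤ 2 * (1 - ‖(K.orthogonalProjectionOnto v : E)‖)
        + 2 * ‖v - (K.orthogonalProjectionOnto v : E)‖ := by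
  set w : E := (K.orthogonalProjectionOnto v : E) with hw
  have hwpos : (0 : ℝ) < ‖w‖ := norm_pos_iff.mpr hPv
  have hw1 : ‖w‖ ≤ 1 := by
    have := Submodule.orthogonalProjectionOnto_norm_le K
    calc ‖w‖ ≤ ‖K.orthogonalProjectionOnto‖ * ‖v‖ := by
          simpa [hw] using (K.orthogonalProjectionOnto).le_opNorm v
      _ ≤ 1 := by rw [hv]; simpa using this
  set p : E := ‖w‖⁻¹ • w with hp
  have hpnorm : ‖p‖ = 1 := by
    rw [hp, norm_smul, norm_inv, norm_norm, inv_mul_cancel₀ (ne_of_gt hwpos)]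
  have hfac : ⟪p, u⟫ ^ 2 - ⟪v, u⟫ ^ 2 = ⟪p + v, u⟫ * ⟪p - v, u⟫ := by
    rw [inner_add_left, inner_sub_left]; ring
  have h1 : ⟪p + v, u⟫ * ⟪p - v, u⟫ ≤ ‖p + v‖ * ‖p - v‖ := by
    calc ⟪p + v, u⟫ * ⟪p - v, u⟫ ≤ |⟪p + v, u⟫| * |⟪p - v, u⟫| := by
          rw [← abs_mul]; exact le_abs_self _
      _ ≤ (‖p + v‖ * ‖u‖) * (‖p - v‖ * ‖u‖) := by
          exact mul_le_mul (abs_real_inner_le_norm _ _) (abs_real_inner_le_norm _ _)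
            (abs_nonneg _) (by positivity)
      _ = ‖p + v‖ * ‖p - v‖ := by rw [hu]; ring
  have h2 : ‖p + v‖ ≤ 2 := by
    calc ‖p + v‖ ≤ ‖p‖ + ‖v‖ := norm_add_le _ _
      _ = 2 := by rw [hpnorm, hv]; norm_num
  have hpw : ‖p - w‖ = 1 - ‖w‖ := by
    have : p - w = (‖w‖⁻¹ - 1) • w := by rw [hp, sub_smul, one_smul]
    rw [this, norm_smul, Real.norm_eq_abs, abs_of_nonneg (by
      rw [sub_nonneg]; exact (one_le_inv₀ hwpos).mpr hw1)]
    field_simp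
  have h3 : ‖p - v‖ ≤ (1 - ‖w‖) + ‖v - w‖ := by
    calc ‖p - v‖ ≤ ‖p - w‖ + ‖w - v‖ := norm_sub_le_norm_sub_add_norm_sub _ _ _
      _ = (1 - ‖w‖) + ‖v - w‖ := by rw [hpw, norm_sub_rev]
  rw [hfac]
  have hnn : 0 ≤ ‖p - v‖ := norm_nonneg _
  calc ⟪p + v, u⟫ * ⟪p - v, u⟫ ≤ ‖p + v‖ * ‖p - v‖ := h1
    _ ≤ 2 * ‖p - v‖ := mul_le_mul_of_nonneg_right h2 hnn
    _ ≤ 2 * ((1 - ‖w‖) + ‖v - w‖) := by linarith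
    _ = 2 * (1 - ‖w‖) + 2 * ‖v - w‖ := by ring
end

section
/- Let A be a d×d real symmetric positive semidefinite matrix admitting an orthonormal basis u₁, …, u_d of ℝ^d consisting of eigenvectors of A with corresponding eigenvalues λ₁, …, λ_d, and let λ_min = minᵢ λᵢ. Let v ∈ ℝ^d be a unit vector and set a = vᵀ A v. Let S = { i : λᵢ ≤ a/2 } and ε = Σ_{i ∈ S} ⟨v, uᵢ⟩². Then for every x ∈ ℝ^d, xᵀ (A − (a/5) v vᵀ) x ≥ min{ a/10, λ_min − (2a/5)·ε } · ‖x‖². -/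
open scoped BigOperators RealInnerProductSpace

set_option maxHeartbeats 1000000 in
/-- Let `A` be a `d×d` real symmetric positive semidefinite matrix admitting
an orthonormal basis `u₁, …, u_d` of `ℝ^d` consisting of eigenvectors of `A` with eigenvalues
`lam i`, and let `lmin = minᵢ lam i`. Let `v` be a unit vector and `a = vᵀ A v`. With
`ε = ∑_{i : lam i ≤ a/2} ⟨v, uᵢ⟩²`, one has, for every `x`,
`xᵀ (A − (a/5) v vᵀ) x ≥ min{ a/10, lmin − (2a/5)·ε } · ‖x‖²`. -/
theorem stmt_4 (d : ℕ) (A : Matrix (Fin d) (Fin d) ℝ) (hA : A.PosSemidef)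
    (u : Fin d → EuclideanSpace ℝ (Fin d)) (hu : Orthonormal ℝ u)
    (hspan : Submodule.span ℝ (Set.range u) = ⊤)
    (lam : Fin d → ℝ) (heig : ∀ i, A.mulVec (u i) = lam i • u i)
    (lmin : ℝ) (hlmin : ∀ i, lmin ≤ lam i) (hlmin' : ∃ i, lam i = lmin)
    (v : EuclideanSpace ℝ (Fin d)) (hv : ‖v‖ = 1)
    (a : ℝ) (ha : a = dotProduct v (A.mulVec v))
    (eps : ℝ)
    (heps : eps = ∑ i ∈ Finset.univ.filter fun i => lam i ≤ a / 2, ⟪v, u i⟫ ^ 2) :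
    ∀ x : EuclideanSpace ℝ (Fin d),
      min (a / 10) (lmin - (2 * a / 5) * eps) * ‖x‖ ^ 2
        ≤ dotProduct x ((A - (a / 5) • Matrix.vecMulVec v v).mulVec x) := by
  intro x
  have hdi : ∀ y z : EuclideanSpace ℝ (Fin d),
      dotProduct (y : Fin d → ℝ) (z : Fin d → ℝ) = ⟪y, z⟫ := by
    intro y z
    simp [PiLp.inner_apply, dotProduct, RCLike.inner_apply, mul_comm]
  let B : OrthonormalBasis (Fin d) ℝ (EuclideanSpace ℝ (Fin d)) :=
    OrthonormalBasis.mk hu hspan.ge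
  have hB : ∀ i, B i = u i := fun i => by simp [B]
  have inner_exp : ∀ y z : EuclideanSpace ℝ (Fin d),
      ⟪y, z⟫ = ∑ i, ⟪u i, y⟫ * ⟪u i, z⟫ := by
    intro y z
    conv_lhs => rw [← B.sum_repr' z]
    rw [inner_sum]
    refine Finset.sum_congr rfl fun i _ => ?_
    rw [real_inner_smul_right, hB, real_inner_comm y (u i)]
    ring
  have hAt : A.transpose = A := by
    have := hA.1
    exact (Matrix.conjTranspose_eq_transpose_of_trivial A).symm.trans this
  have hAsym : ∀ (i : Fin d) (y : EuclideanSpace ℝ (Fin d)),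
      dotProduct (u i : Fin d → ℝ) (A.mulVec y) = lam i * ⟪u i, y⟫ := by
    intro i y
    rw [Matrix.dotProduct_mulVec, ← Matrix.mulVec_transpose, hAt, heig i]
    show dotProduct (lam i • (u i : Fin d → ℝ)) y = _
    rw [smul_dotProduct, hdi]
    simp
  have hquad : ∀ y : EuclideanSpace ℝ (Fin d),
      dotProduct (y : Fin d → ℝ) (A.mulVec y) = ∑ i, lam i * ⟪u i, y⟫ ^ 2 := by
    intro y
    set z : EuclideanSpace ℝ (Fin d) := WithLp.toLp 2 (A.mulVec y) with hz
    rw [show A.mulVec y = (z : Fin d → ℝ) from rfl, hdi y z, inner_exp]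
    refine Finset.sum_congr rfl fun i _ => ?_
    rw [← hdi (u i) z, hz, WithLp.ofLp_toLp, hAsym]
    ring
  -- notation
  set c : Fin d → ℝ := fun i => ⟪u i, x⟫ with hc
  set b : Fin d → ℝ := fun i => ⟪u i, v⟫ with hb
  -- rank-one part
  have hvvt : dotProduct (x : Fin d → ℝ) ((Matrix.vecMulVec v v).mulVec x)
      = ⟪v, x⟫ ^ 2 := by
    have hins : ⟪v, x⟫ = ∑ j, v j * x j := by
      rw [← hdi v x]; rfl
    rw [hins, pow_two]
    simp only [dotProduct, Matrix.mulVec, Matrix.vecMulVec_apply, Finset.mul_sum,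
      Finset.sum_mul]
    exact Finset.sum_congr rfl fun i _ => Finset.sum_congr rfl fun j _ => by ring
  -- LHS matrix split
  have hsplit : dotProduct (x : Fin d → ℝ) ((A - (a / 5) • Matrix.vecMulVec v v).mulVec x)
      = dotProduct (x : Fin d → ℝ) (A.mulVec x) - (a/5) * ⟪v, x⟫ ^ 2 := by
    rw [Matrix.sub_mulVec, dotProduct_sub, Matrix.smul_mulVec,
      dotProduct_smul, hvvt]
    simp [smul_eq_mul]
  rw [hsplit, hquad x]
  -- basic scalar facts
  have hnorm : ‖x‖ ^ 2 = ∑ i, c i ^ 2 := by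
    rw [← real_inner_self_eq_norm_sq, inner_exp]
    simp only [hc, pow_two]
  have hvx : ⟪v, x⟫ = ∑ i, b i * c i := inner_exp v x
  have hb1 : ∑ i, b i ^ 2 = 1 := by
    have h := inner_exp v v
    rw [real_inner_self_eq_norm_sq, hv] at h
    simp only [hb, pow_two]
    simpa using h.symm
  have ha' : a = ∑ i, lam i * b i ^ 2 := by rw [ha, hquad v]
  have ha0 : 0 ≤ a := by
    rw [ha]
    have := hA.dotProduct_mulVec_nonneg (v : Fin d → ℝ)
    simpa using this
  have hepsb : eps = ∑ i ∈ Finset.univ.filter fun i => lam i ≤ a / 2, b i ^ 2 := by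
    rw [heps]
    exact Finset.sum_congr rfl fun i _ => by rw [real_inner_comm]
  -- split sums
  set T : Finset (Fin d) := Finset.univ.filter fun i => lam i ≤ a / 2 with hT
  set T' : Finset (Fin d) := Finset.univ.filter fun i => ¬ (lam i ≤ a / 2) with hT'
  set P : ℝ := ∑ i ∈ T, c i ^ 2 with hP
  set Q : ℝ := ∑ i ∈ T', c i ^ 2 with hQ
  have hsum : ∀ f : Fin d → ℝ, ∑ i ∈ T, f i + ∑ i ∈ T', f i = ∑ i, f i := fun f =>
    Finset.sum_filter_add_sum_filter_not Finset.univ _ f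
  have hP0 : 0 ≤ P := Finset.sum_nonneg fun i _ => sq_nonneg _
  have hQ0 : 0 ≤ Q := Finset.sum_nonneg fun i _ => sq_nonneg _
  have hPQ : ‖x‖ ^ 2 = P + Q := by rw [hnorm, ← hsum fun i => c i ^ 2]
  have heps0 : 0 ≤ eps := by
    rw [hepsb]; exact Finset.sum_nonneg fun i _ => sq_nonneg _
  have hbT' : ∑ i ∈ T', b i ^ 2 ≤ 1 := by
    have h := hsum fun i => b i ^ 2
    rw [hb1] at h
    have : (0:ℝ) ≤ ∑ i ∈ T, b i ^ 2 := Finset.sum_nonneg fun i _ => sq_nonneg _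
    linarith
  set I1 : ℝ := ∑ i ∈ T, b i * c i with hI1
  set I2 : ℝ := ∑ i ∈ T', b i * c i with hI2
  have hIsplit : ⟪v, x⟫ = I1 + I2 := by rw [hvx, ← hsum fun i => b i * c i]
  have hCS1 : I1 ^ 2 ≤ eps * P := by
    have := Finset.sum_mul_sq_le_sq_mul_sq T b c
    rw [← hepsb] at this
    exact this
  have hCS2 : I2 ^ 2 ≤ Q := by
    have h := Finset.sum_mul_sq_le_sq_mul_sq T' b c
    calc I2 ^ 2 ≤ (∑ i ∈ T', b i ^ 2) * Q := h
      _ ≤ 1 * Q := mul_le_mul_of_nonneg_right hbT' hQ0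
      _ = Q := one_mul Q
  have hlamT : lmin * P ≤ ∑ i ∈ T, lam i * c i ^ 2 := by
    rw [hP, Finset.mul_sum]
    exact Finset.sum_le_sum fun i _ => mul_le_mul_of_nonneg_right (hlmin i) (sq_nonneg _)
  have hlamT' : (a/2) * Q ≤ ∑ i ∈ T', lam i * c i ^ 2 := by
    rw [hQ, Finset.mul_sum]
    refine Finset.sum_le_sum fun i hi => ?_
    have : a / 2 ≤ lam i := by
      have := Finset.mem_filter.mp hi
      linarith [not_le.mp this.2]
    exact mul_le_mul_of_nonneg_right this (sq_nonneg _)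
  have hlamsum : ∑ i, lam i * c i ^ 2
      = (∑ i ∈ T, lam i * c i ^ 2) + ∑ i ∈ T', lam i * c i ^ 2 :=
    (hsum fun i => lam i * c i ^ 2).symm
  -- final
  have hItot : (I1 + I2) ^ 2 ≤ 2 * (eps * P) + 2 * Q := by
    nlinarith [sq_nonneg (I1 - I2)]
  have h2 : a/5 * (I1 + I2) ^ 2 ≤ a/5 * (2 * (eps * P) + 2 * Q) :=
    mul_le_mul_of_nonneg_left hItot (by linarith)
  have hm1 : min (a / 10) (lmin - (2 * a / 5) * eps) ≤ a / 10 := min_le_left _ _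
  have hm2 : min (a / 10) (lmin - (2 * a / 5) * eps) ≤ lmin - (2 * a / 5) * eps :=
    min_le_right _ _
  rw [hPQ, hIsplit, hlamsum]
  nlinarith [mul_le_mul_of_nonneg_right hm1 hQ0, mul_le_mul_of_nonneg_right hm2 hP0,
    h2, hlamT, hlamT']
end

section
/- Let f : ℝ^d → ℝ be convex and twice continuously differentiable with L-Lipschitz gradient and H-Lipschitz continuous Hessian, where L, H > 0. Fix x̃ ∈ ℝ^d, γ > 0, and constants 0 < σ_u < σ < 1. Define g(y) = f(x̃) + ⟨∇f(x̃), y − x̃⟩ + ½⟨∇²f(x̃)(y − x̃), y − x̃⟩ + (1/(2γ))‖y − x̃‖² and g* = inf_y g(y). Suppose y ∈ ℝ^d satisfies g(y) − g* ≤ ε_A where ε_A < (σ − σ_u)² / (2γ(Lγ + 1 + (σ − σ_u)²)(L + 1/γ)) · (f(x̃) − g*), and additionally γ‖y − x̃‖ ≤ 2σ_u/H. Then ‖γ∇f(y) + y − x̃‖² ≤ σ²‖y − x̃‖². -/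
open scoped RealInnerProductSpace
open Filter

section Aux

variable {E : Type*} [NormedAddCommGroup E] [InnerProductSpace ℝ E] [CompleteSpace E]

lemma aux_grad_eq (f : E → ℝ) :
    gradient f = fun z => (InnerProductSpace.toDual ℝ E).symm (fderiv ℝ f z) := rfl

lemma aux_grad_diff {f : E → ℝ} (hf : ContDiff ℝ 2 f) : Differentiable ℝ (gradient f) := by
  have h1 : ContDiff ℝ 1 (fderiv ℝ f) := hf.fderiv_right (by norm_num)
  rw [aux_grad_eq]
  exact (InnerProductSpace.toDual ℝ E).symm.differentiable.comp (h1.differentiable one_ne_zero)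

lemma aux_grad_hasFDerivAt {f : E → ℝ} (hf : ContDiff ℝ 2 f) (x : E) :
    HasFDerivAt (gradient f) (fderiv ℝ (gradient f) x) x :=
  ((aux_grad_diff hf) x).hasFDerivAt

lemma aux_hess_symm {f : E → ℝ} (hf : ContDiff ℝ 2 f) (x : E) (u v : E) :
    ⟪fderiv ℝ (gradient f) x u, v⟫ = ⟪fderiv ℝ (gradient f) x v, u⟫ := by
  have hdf : Differentiable ℝ f := hf.differentiable two_ne_zero
  have h1 : ContDiff ℝ 1 (fderiv ℝ f) := hf.fderiv_right (by norm_num)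
  have hd2 : HasFDerivAt (fderiv ℝ f) (fderiv ℝ (fderiv ℝ f) x) x :=
    ((h1.differentiable one_ne_zero) x).hasFDerivAt
  have happ : ∀ w : E, fderiv ℝ (gradient f) x w =
      (InnerProductSpace.toDual ℝ E).symm (fderiv ℝ (fderiv ℝ f) x w) := by
    intro w
    rw [aux_grad_eq f]
    have : fderiv ℝ (⇑(InnerProductSpace.toDual ℝ E).symm ∘ fderiv ℝ f) x =
        ((InnerProductSpace.toDual ℝ E).symm.toContinuousLinearEquiv :
          StrongDual ℝ E ≃L⋆[ℝ] E).toContinuousLinearMap.comp (fderiv ℝ (fderiv ℝ f) x) :=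
      LinearIsometryEquiv.comp_fderiv _
    rw [show (fun z => (InnerProductSpace.toDual ℝ E).symm (fderiv ℝ f z)) =
        ⇑(InnerProductSpace.toDual ℝ E).symm ∘ fderiv ℝ f from rfl, this]
    rfl
  rw [happ, happ, InnerProductSpace.toDual_symm_apply, InnerProductSpace.toDual_symm_apply]
  exact second_derivative_symmetric (fun z => (hdf z).hasFDerivAt) hd2 u v


lemma aux_taylor {f : E → ℝ} (hf : ContDiff ℝ 2 f) {H : ℝ} (hH : 0 ≤ H)
    (hhess : ∀ x y, ‖fderiv ℝ (gradient f) x - fderiv ℝ (gradient f) y‖ ≤ H * ‖x - y‖)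
    (xt y : E) :
    ‖gradient f y - gradient f xt - fderiv ℝ (gradient f) xt (y - xt)‖
      ≤ H / 2 * ‖y - xt‖ ^ 2 := by
  set v := y - xt with hv
  set A := fderiv ℝ (gradient f) xt with hA
  set φ : ℝ → E := fun t => gradient f (xt + t • v) - t • A v with hφ
  set φ' : ℝ → E := fun t => fderiv ℝ (gradient f) (xt + t • v) v - A v with hφ'
  have hc : ∀ t : ℝ, HasDerivAt (fun s : ℝ => xt + s • v) v t := fun t => by
    simpa using ((hasDerivAt_id t).smul_const v).const_add xt
  have hder : ∀ t : ℝ, HasDerivAt φ (φ' t) t := by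
    intro t
    have h1 : HasDerivAt (fun s : ℝ => gradient f (xt + s • v))
        (fderiv ℝ (gradient f) (xt + t • v) v) t :=
      (aux_grad_hasFDerivAt hf _).comp_hasDerivAt t (hc t)
    exact h1.sub (by simpa using (hasDerivAt_id t).smul_const (A v))
  have hcont : Continuous φ' := by
    have hlipB : LipschitzWith (H * ‖v‖).toNNReal
        (fun t : ℝ => fderiv ℝ (gradient f) (xt + t • v)) := by
      apply LipschitzWith.of_dist_le_mul
      intro s t
      rw [dist_eq_norm, dist_eq_norm]
      have h2 := hhess (xt + s • v) (xt + t • v)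
      have heq : (xt + s • v) - (xt + t • v) = (s - t) • v := by
        rw [sub_smul]; abel
      rw [heq] at h2
      calc ‖fderiv ℝ (gradient f) (xt + s • v) - fderiv ℝ (gradient f) (xt + t • v)‖
          ≤ H * ‖(s - t) • v‖ := h2
        _ = (H * ‖v‖).toNNReal * ‖s - t‖ := by
            rw [norm_smul, Real.norm_eq_abs, Real.coe_toNNReal _ (by positivity)]
            ring
    exact (hlipB.continuous.clm_apply continuous_const).sub continuous_const
  have hint : IntervalIntegrable φ' MeasureTheory.volume 0 1 := hcont.intervalIntegrable 0 1
  have heq : ∫ t in (0:ℝ)..1, φ' t = φ 1 - φ 0 :=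
    intervalIntegral.integral_eq_sub_of_hasDerivAt (fun t _ => hder t) hint
  have hbound : ∀ t ∈ Set.uIoc (0:ℝ) 1, ‖φ' t‖ ≤ H * ‖v‖ ^ 2 * t := by
    intro t ht
    rw [Set.uIoc_of_le (by norm_num : (0:ℝ) ≤ 1)] at ht
    have ht0 : 0 < t := ht.1
    have h2 : ‖fderiv ℝ (gradient f) (xt + t • v) - A‖ ≤ H * ‖t • v‖ := by
      have := hhess (xt + t • v) xt
      simpa using this
    calc ‖φ' t‖ = ‖(fderiv ℝ (gradient f) (xt + t • v) - A) v‖ := by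
          simp [hφ', ContinuousLinearMap.sub_apply]
      _ ≤ ‖fderiv ℝ (gradient f) (xt + t • v) - A‖ * ‖v‖ :=
          ContinuousLinearMap.le_opNorm _ _
      _ ≤ H * ‖t • v‖ * ‖v‖ := by
          apply mul_le_mul_of_nonneg_right h2 (norm_nonneg _)
      _ = H * ‖v‖ ^ 2 * t := by
          rw [norm_smul, Real.norm_eq_abs, abs_of_pos ht0]; ring
  have hnorm : ‖∫ t in (0:ℝ)..1, φ' t‖ ≤ |∫ t in (0:ℝ)..1, H * ‖v‖ ^ 2 * t| := by
    apply intervalIntegral.norm_integral_le_abs_of_norm_le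
    · exact (MeasureTheory.ae_restrict_mem measurableSet_uIoc).mono hbound
    · exact (continuous_const.mul continuous_id).intervalIntegrable 0 1
  have hval : ∫ t in (0:ℝ)..1, H * ‖v‖ ^ 2 * t = H * ‖v‖ ^ 2 * (1 / 2) := by
    rw [intervalIntegral.integral_const_mul, integral_id]
    norm_num
  have hφdiff : φ 1 - φ 0 = gradient f y - gradient f xt - A v := by
    simp only [hφ, one_smul, zero_smul, smul_zero, sub_zero, add_zero]
    rw [show xt + v = y by rw [hv]; abel]
    abel
  rw [heq, hφdiff] at hnorm
  rw [hval] at hnorm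
  calc ‖gradient f y - gradient f xt - A v‖ ≤ |H * ‖v‖ ^ 2 * (1 / 2)| := hnorm
    _ = H / 2 * ‖v‖ ^ 2 := by
        rw [abs_of_nonneg (by positivity)]; ring

lemma aux_first_order {f : E → ℝ} (hf : ContDiff ℝ 2 f) (hconv : ConvexOn ℝ Set.univ f)
    (x z : E) : f x + ⟪gradient f x, z - x⟫ ≤ f z := by
  set φ : ℝ → ℝ := fun t => f (x + t • (z - x)) with hφ
  have hφconv : ConvexOn ℝ Set.univ φ := by
    have h := hconv.comp_affineMap
      (AffineMap.const ℝ ℝ x + LinearMap.toAffineMap (LinearMap.toSpanSingleton ℝ E (z - x)))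
    simpa [Function.comp_def, hφ, LinearMap.toSpanSingleton_apply] using h
  have hc : HasDerivAt (fun t : ℝ => x + t • (z - x)) (z - x) 0 := by
    simpa using ((hasDerivAt_id (0:ℝ)).smul_const (z - x)).const_add x
  have hfd : HasFDerivAt f (fderiv ℝ f x) x := ((hf.differentiable two_ne_zero) x).hasFDerivAt
  have hfd0 : HasFDerivAt f (fderiv ℝ f x) (x + (0:ℝ) • (z - x)) := by simpa using hfd
  have hder : HasDerivAt φ ⟪gradient f x, z - x⟫ 0 := by
    have h1 := hfd0.comp_hasDerivAt 0 hc
    have h2 : fderiv ℝ f x (z - x) = ⟪gradient f x, z - x⟫ :=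
      (InnerProductSpace.toDual_symm_apply).symm
    rw [← h2]
    exact h1
  have hsl := hφconv.le_slope_of_hasDerivAt (Set.mem_univ (0:ℝ)) (Set.mem_univ (1:ℝ))
    one_pos hder
  rw [slope_def_field] at hsl
  have hφ1 : φ 1 = f z := by simp [hφ]
  have hφ0 : φ 0 = f x := by simp [hφ]
  rw [hφ1, hφ0] at hsl
  have : ⟪gradient f x, z - x⟫ ≤ f z - f x := by
    simpa using hsl
  linarith

lemma aux_mono_grad {f : E → ℝ} (hf : ContDiff ℝ 2 f) (hconv : ConvexOn ℝ Set.univ f)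
    (x z : E) : 0 ≤ ⟪gradient f z - gradient f x, z - x⟫ := by
  have h1 := aux_first_order hf hconv x z
  have h2 := aux_first_order hf hconv z x
  have h3 : ⟪gradient f z, x - z⟫ = -⟪gradient f z, z - x⟫ := by
    rw [show x - z = -(z - x) by abel, inner_neg_right]
  rw [inner_sub_left]
  rw [h3] at h2
  linarith

lemma aux_hess_nonneg {f : E → ℝ} (hf : ContDiff ℝ 2 f) (hconv : ConvexOn ℝ Set.univ f)
    (x v : E) : 0 ≤ ⟪fderiv ℝ (gradient f) x v, v⟫ := by
  set ψ : ℝ → ℝ := fun t => ⟪gradient f (x + t • v), v⟫ with hψ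
  have hc : HasDerivAt (fun t : ℝ => x + t • v) v 0 := by
    simpa using ((hasDerivAt_id (0:ℝ)).smul_const v).const_add x
  have h1 : HasDerivAt (fun t : ℝ => gradient f (x + t • v)) (fderiv ℝ (gradient f) x v) 0 := by
    have h := (aux_grad_hasFDerivAt hf (x + (0:ℝ) • v)).comp_hasDerivAt 0 hc
    simpa [Function.comp_def] using h
  have hder : HasDerivAt ψ ⟪fderiv ℝ (gradient f) x v, v⟫ 0 := by
    have := h1.inner (𝕜 := ℝ) (hasDerivAt_const (0:ℝ) v)
    simpa [hψ] using this
  have hslope : ∀ t ∈ Set.Ioi (0:ℝ), 0 ≤ slope ψ 0 t := by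
    intro t ht
    have ht0 : (0:ℝ) < t := ht
    rw [slope_def_field]
    apply div_nonneg _ (by simpa using ht0.le)
    have hm := aux_mono_grad hf hconv x (x + t • v)
    have he : (x + t • v) - x = t • v := by abel
    rw [he, real_inner_smul_right] at hm
    have hinner : 0 ≤ ⟪gradient f (x + t • v) - gradient f x, v⟫ :=
      nonneg_of_mul_nonneg_right hm ht0
    rw [inner_sub_left] at hinner
    simp only [hψ]
    simpa using hinner
  have htend : Tendsto (slope ψ 0) (nhdsWithin 0 (Set.Ioi 0)) (nhds ⟪fderiv ℝ (gradient f) x v, v⟫) :=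
    (hasDerivAt_iff_tendsto_slope.1 hder).mono_left
      (nhdsWithin_mono _ (fun t ht => ne_of_gt ht))
  exact ge_of_tendsto htend (eventually_nhdsWithin_of_forall hslope)

end Aux
set_option maxHeartbeats 1000000 in
/-- Let `f : ℝ^d → ℝ` be convex and twice continuously differentiable with
`L`-Lipschitz gradient and `H`-Lipschitz Hessian. Fix `xt`, `γ > 0` and `0 < σ_u < σ < 1`.
Let `g` be the second-order Taylor model of `f` at `xt` plus the proximal term
`(1/(2γ))‖·−xt‖²`, and let `gstar` be its infimum. If `y` satisfies `g y − gstar ≤ εA` with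
`εA < (σ−σ_u)²/(2γ(Lγ+1+(σ−σ_u)²)(L+1/γ)) · (f xt − gstar)` and `γ‖y−xt‖ ≤ 2σ_u/H`, then
`‖γ∇f(y) + y − xt‖² ≤ σ²‖y−xt‖²`. -/
theorem stmt_5 {d : ℕ} (f : EuclideanSpace ℝ (Fin d) → ℝ)
    (hf : ContDiff ℝ 2 f) (hconv : ConvexOn ℝ Set.univ f)
    (L H : ℝ) (hL : 0 < L) (hH : 0 < H)
    (hgrad : ∀ x y, ‖gradient f x - gradient f y‖ ≤ L * ‖x - y‖)
    (hhess : ∀ x y, ‖fderiv ℝ (gradient f) x - fderiv ℝ (gradient f) y‖ ≤ H * ‖x - y‖)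
    (xt : EuclideanSpace ℝ (Fin d)) (γ σ_u σ : ℝ)
    (hγ : 0 < γ) (hσu : 0 < σ_u) (hσuσ : σ_u < σ) (hσ1 : σ < 1)
    (g : EuclideanSpace ℝ (Fin d) → ℝ)
    (hg : ∀ z, g z = f xt + ⟪gradient f xt, z - xt⟫
        + (1 / 2) * ⟪(fderiv ℝ (gradient f) xt) (z - xt), z - xt⟫
        + (1 / (2 * γ)) * ‖z - xt‖ ^ 2)
    (gstar : ℝ) (hgstar : IsGLB (Set.range g) gstar)
    (y : EuclideanSpace ℝ (Fin d)) (εA : ℝ)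
    (hy : g y - gstar ≤ εA)
    (hεA : εA < (σ - σ_u) ^ 2 / (2 * γ * (L * γ + 1 + (σ - σ_u) ^ 2) * (L + 1 / γ))
        * (f xt - gstar))
    (hstep : γ * ‖y - xt‖ ≤ 2 * σ_u / H) :
    ‖γ • gradient f y + (y - xt)‖ ^ 2 ≤ σ ^ 2 * ‖y - xt‖ ^ 2 := by
  have hγ' : γ ≠ 0 := ne_of_gt hγ
  have hupos : 0 < L + 1 / γ := by positivity
  obtain ⟨b, hbdef⟩ : ∃ b, b = gradient f xt := ⟨_, rfl⟩
  obtain ⟨A, hAdef⟩ : ∃ A, A = fderiv ℝ (gradient f) xt := ⟨_, rfl⟩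
  obtain ⟨p, hpdef⟩ : ∃ p, p = y - xt := ⟨_, rfl⟩
  rw [← hbdef, ← hAdef] at hg
  rw [← hpdef] at hstep ⊢
  have hsymm : ∀ u v : EuclideanSpace ℝ (Fin d), ⟪A u, v⟫ = ⟪A v, u⟫ := by
    rw [hAdef]; exact fun u v => aux_hess_symm hf xt u v
  have hApos : ∀ v, 0 ≤ ⟪A v, v⟫ := by
    rw [hAdef]; exact fun v => aux_hess_nonneg hf hconv xt v
  have hAnorm : ∀ v, ‖A v‖ ≤ L * ‖v‖ := by
    intro v
    have hlip : LipschitzWith L.toNNReal (gradient f) := by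
      apply LipschitzWith.of_dist_le_mul
      intro a c
      rw [dist_eq_norm, dist_eq_norm, Real.coe_toNNReal _ hL.le]
      exact hgrad a c
    have hAle : ‖A‖ ≤ L := by
      have h := norm_fderiv_le_of_lipschitz ℝ hlip (x₀ := xt)
      rw [Real.coe_toNNReal _ hL.le] at h
      rw [hAdef]
      exact h
    calc ‖A v‖ ≤ ‖A‖ * ‖v‖ := A.le_opNorm v
      _ ≤ L * ‖v‖ := mul_le_mul_of_nonneg_right hAle (norm_nonneg _)
  have hAq : ∀ v, ⟪A v, v⟫ ≤ L * ‖v‖ ^ 2 := by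
    intro v
    calc ⟪A v, v⟫ ≤ ‖A v‖ * ‖v‖ := real_inner_le_norm _ _
      _ ≤ (L * ‖v‖) * ‖v‖ := mul_le_mul_of_nonneg_right (hAnorm v) (norm_nonneg _)
      _ = L * ‖v‖ ^ 2 := by ring
  obtain ⟨q, hqdef⟩ : ∃ q : EuclideanSpace ℝ (Fin d) → ℝ,
      q = fun w => ⟪b, w⟫ + (1/2) * ⟪A w, w⟫ + (1/(2*γ)) * ‖w‖^2 := ⟨_, rfl⟩
  have hgq : ∀ w, g (xt + w) = f xt + q w := by
    intro w
    rw [hg, hqdef]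
    simp only [add_sub_cancel_left]
    ring
  have hgy : g y = f xt + q p := by
    rw [hg, hqdef, ← hpdef]
    ring
  have hexp : ∀ v w, q (v + w)
      = q v + ⟪b + A v + γ⁻¹ • v, w⟫ + (1/2) * ⟪A w, w⟫ + (1/(2*γ)) * ‖w‖^2 := by
    intro v w
    have hAadd : A (v + w) = A v + A w := map_add A v w
    have hs : ⟪A w, v⟫ = ⟪A v, w⟫ := hsymm w v
    rw [hqdef]
    simp only [hAadd, inner_add_left, inner_add_right, norm_add_sq_real,
      real_inner_smul_left]
    linear_combination (1/2 : ℝ) * hs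
  have hdesc : ∀ v, ‖b + A v + γ⁻¹ • v‖^2 ≤ 2*(L + 1/γ)*(g (xt + v) - gstar) := by
    intro v
    obtain ⟨G, hGdef⟩ : ∃ G, G = b + A v + γ⁻¹ • v := ⟨_, rfl⟩
    obtain ⟨c, hcdef⟩ : ∃ c : ℝ, c = γ/(L*γ+1) := ⟨_, rfl⟩
    rw [← hGdef]
    have hLγ : 0 < L*γ+1 := by positivity
    have hcpos : 0 < c := by rw [hcdef]; positivity
    have hcc : c * (L + 1/γ) = 1 := by rw [hcdef]; field_simp
    have hccγ : c * (L*γ+1) = γ := by rw [hcdef]; field_simp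
    have h0 : gstar ≤ g (xt + (v + (-c) • G)) := hgstar.1 (Set.mem_range_self _)
    rw [hgq, hexp v ((-c) • G)] at h0
    rw [← hGdef] at h0
    have e1 : ⟪G, (-c) • G⟫ = -c * ‖G‖^2 := by
      rw [real_inner_smul_right, real_inner_self_eq_norm_sq]
    have e2 : ⟪A ((-c) • G), (-c) • G⟫ ≤ c^2 * (L * ‖G‖^2) := by
      rw [map_smul, real_inner_smul_left, real_inner_smul_right]
      nlinarith [hAq G]
    have e3 : ‖(-c) • G‖^2 = c^2 * ‖G‖^2 := by
      rw [norm_smul, Real.norm_eq_abs, abs_neg, abs_of_pos hcpos]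
      ring
    rw [e1, e3] at h0
    have hq2 : g (xt + v) = f xt + q v := hgq v
    have e4 : 1/(2*γ) * (c^2*‖G‖^2) = 1/2*(c*‖G‖^2) - 1/2*(L*(c^2*‖G‖^2)) := by
      rw [one_div_mul_eq_div, div_eq_iff (mul_ne_zero two_ne_zero hγ')]
      linear_combination (c*‖G‖^2) * hccγ
    have hX : c*‖G‖^2/2 ≤ g (xt + v) - gstar := by
      rw [hq2]
      linarith [e2, h0, e4]
    calc ‖G‖^2 = (c*(L + 1/γ))*‖G‖^2 := by rw [hcc, one_mul]
      _ = 2*(L + 1/γ)*(c*‖G‖^2/2) := by ring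
      _ ≤ 2*(L + 1/γ)*(g (xt + v) - gstar) := by
          apply mul_le_mul_of_nonneg_left hX (by positivity)
  -- existence of a minimizer of g
  have hgcont : Continuous g := by
    have hge : g = fun z => f xt + ⟪b, z - xt⟫ + (1/2) * ⟪A (z - xt), z - xt⟫
        + (1/(2*γ)) * ‖z - xt‖^2 := funext hg
    rw [hge]
    have h1 : Continuous fun z : EuclideanSpace ℝ (Fin d) => z - xt :=
      continuous_id.sub continuous_const
    exact ((continuous_const.add (Continuous.inner continuous_const h1)).add
      (continuous_const.mul (Continuous.inner (A.continuous.comp h1) h1))).add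
      (continuous_const.mul ((h1.norm.pow 2)))
  have hcoer : Filter.Tendsto g (Filter.cocompact _) Filter.atTop := by
    have hlow : ∀ z, f xt - ‖b‖ * ‖z - xt‖ + (1/(2*γ)) * ‖z - xt‖^2 ≤ g z := by
      intro z
      rw [hg]
      have h1 := abs_real_inner_le_norm b (z - xt)
      have h2 := hApos (z - xt)
      have h3 := (abs_le.1 h1).1
      have h4 : 0 ≤ ‖z - xt‖^2 := sq_nonneg _
      have h5 : 0 < 1/(2*γ) := by positivity
      nlinarith
    have h2 : Filter.Tendsto (fun z : EuclideanSpace ℝ (Fin d) => ‖z - xt‖)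
        (Filter.cocompact _) Filter.atTop := by
      simpa [dist_eq_norm] using tendsto_dist_right_cocompact_atTop xt
    have h3 : Filter.Tendsto (fun r : ℝ => f xt - ‖b‖ * r + (1/(2*γ)) * r^2)
        Filter.atTop Filter.atTop := by
      have ha : Filter.Tendsto (fun r : ℝ => (1/(2*γ)) * r + (-‖b‖))
          Filter.atTop Filter.atTop :=
        Filter.tendsto_atTop_add_const_right _ _
          (Filter.Tendsto.const_mul_atTop (by positivity) Filter.tendsto_id)
      have hb2 : Filter.Tendsto (fun r : ℝ => r * ((1/(2*γ)) * r + (-‖b‖)) + f xt)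
          Filter.atTop Filter.atTop :=
        Filter.tendsto_atTop_add_const_right _ _ (Filter.Tendsto.atTop_mul_atTop₀
          Filter.tendsto_id ha)
      have heq : (fun r : ℝ => f xt - ‖b‖ * r + (1/(2*γ)) * r^2)
          = fun r : ℝ => r * ((1/(2*γ)) * r + (-‖b‖)) + f xt := by
        funext r; ring
      rw [heq]
      exact hb2
    exact Filter.tendsto_atTop_mono hlow (h3.comp h2)
  obtain ⟨zs, hzs⟩ := hgcont.exists_forall_le hcoer
  have hzstar : g zs = gstar := by
    refine le_antisymm ?_ (hgstar.1 (Set.mem_range_self _))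
    exact hgstar.2 (fun r hr => by obtain ⟨z, rfl⟩ := hr; exact hzs z)
  obtain ⟨w, hwdef⟩ : ∃ w, w = zs - xt := ⟨_, rfl⟩
  have hxtw : xt + w = zs := by rw [hwdef]; abel
  have hGw : b + A w + γ⁻¹ • w = 0 := by
    have h := hdesc w
    rw [hxtw, hzstar, sub_self, mul_zero] at h
    have h3 : ‖b + A w + γ⁻¹ • w‖^2 = 0 := le_antisymm h (sq_nonneg _)
    have h2 : ‖b + A w + γ⁻¹ • w‖ = 0 := pow_eq_zero_iff (two_ne_zero) |>.1 h3
    exact norm_eq_zero.1 h2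
  have hq0 : q (0 : EuclideanSpace ℝ (Fin d)) = 0 := by rw [hqdef]; simp
  have hqp : q p = q w + (1/2) * ⟪A (p - w), p - w⟫ + (1/(2*γ)) * ‖p - w‖^2 := by
    have h := hexp w (p - w)
    rw [show w + (p - w) = p by abel, hGw] at h
    simpa using h
  have hqw0 : 0 = q w + (1/2) * ⟪A (-w), -w⟫ + (1/(2*γ)) * ‖(-w : EuclideanSpace ℝ (Fin d))‖^2 := by
    have h := hexp w (-w)
    rw [show w + -w = (0 : EuclideanSpace ℝ (Fin d)) by abel, hGw, hq0] at h
    simpa using h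
  have hεA0 : 0 ≤ εA := le_trans (by linarith [hgstar.1 (Set.mem_range_self y)]) hy
  have hgsw : gstar = f xt + q w := by rw [← hzstar, ← hxtw, hgq]
  have hqpqw : q p - q w ≤ εA := by
    have h1 := hgy
    linarith [hy, hgsw]
  have hpw : ‖p - w‖^2 ≤ 2*γ*εA := by
    have h3 := hApos (p - w)
    have h4 : (1/(2*γ)) * ‖p - w‖^2 ≤ εA := by linarith [hqp, hqpqw, h3]
    have h5 := mul_le_mul_of_nonneg_left h4 (le_of_lt (by positivity : (0:ℝ) < 2*γ))
    have h6 : (2*γ) * ((1/(2*γ)) * ‖p - w‖^2) = ‖p - w‖^2 := by field_simp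
    linarith [h5, h6]
  have hfxt : f xt - gstar ≤ (L + 1/γ)/2 * ‖w‖^2 := by
    have key : f xt - gstar = (1/2) * ⟪A w, w⟫ + (1/(2*γ)) * ‖w‖^2 := by
      have h7 : ⟪A (-w), -w⟫ = ⟪A w, w⟫ := by
        rw [map_neg, inner_neg_neg]
      rw [hgsw]
      rw [h7, norm_neg] at hqw0
      linarith [hqw0]
    rw [key]
    have h8 : (1/(2*γ)) * ‖w‖^2 = (1/γ)/2 * ‖w‖^2 := by
      rw [one_div, one_div, mul_inv]
      ring
    linarith [hAq w, h8]
  have hGp : ‖b + A p + γ⁻¹ • p‖^2 ≤ 2*(L + 1/γ)*εA := by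
    have h := hdesc p
    rw [show xt + p = y by rw [hpdef]; abel] at h
    have h9 : 2*(L + 1/γ)*(g y - gstar) ≤ 2*(L + 1/γ)*εA :=
      mul_le_mul_of_nonneg_left hy (by positivity)
    linarith
  obtain ⟨s, hsdef⟩ : ∃ s : ℝ, s = (σ - σ_u)^2 := ⟨_, rfl⟩
  rw [← hsdef] at hεA
  have hσd : 0 < σ - σ_u := by linarith
  have hspos : 0 < s := by rw [hsdef]; positivity
  have h5 : f xt - gstar ≤ (L + 1/γ)*(‖p‖^2 + 2*γ*εA) := by
    have hwle : ‖w‖ ≤ ‖p‖ + ‖p - w‖ := by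
      calc ‖w‖ = ‖p - (p - w)‖ := by congr 1; abel
        _ ≤ ‖p‖ + ‖p - w‖ := norm_sub_le _ _
    have hw2 : ‖w‖^2 ≤ 2*‖p‖^2 + 2*‖p - w‖^2 := by
      nlinarith [norm_nonneg w, norm_nonneg p, norm_nonneg (p - w),
        sq_nonneg (‖p‖ - ‖p - w‖)]
    nlinarith [hfxt, hpw, hupos, mul_le_mul_of_nonneg_left hw2 hupos.le,
      mul_le_mul_of_nonneg_left hpw hupos.le]
  have hD : 0 < 2*γ*(L*γ+1+s)*(L + 1/γ) := by
    have h1 : 0 < L*γ+1+s := by nlinarith [mul_pos hL hγ, hspos]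
    have h2 : 0 < 2*γ := by positivity
    exact mul_pos (mul_pos h2 h1) hupos
  have h7 : εA * (2*γ*(L*γ+1+s)*(L + 1/γ)) < s * (f xt - gstar) := by
    rw [div_mul_eq_mul_div, lt_div_iff₀ hD] at hεA
    exact hεA
  have h6 : 2*γ*(L*γ+1)*εA ≤ s * ‖p‖^2 := by
    have h8 : s * (f xt - gstar) ≤ s * ((L + 1/γ)*(‖p‖^2 + 2*γ*εA)) :=
      mul_le_mul_of_nonneg_left h5 hspos.le
    have h9 : εA * (2*γ*(L*γ+1+s)) * (L + 1/γ) < (s * (‖p‖^2 + 2*γ*εA)) * (L + 1/γ) := by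
      linarith [h7, h8]
    have h10 : εA * (2*γ*(L*γ+1+s)) < s * (‖p‖^2 + 2*γ*εA) :=
      lt_of_mul_lt_mul_right h9 hupos.le
    linarith [h10]
  have h9' : (γ * ‖b + A p + γ⁻¹ • p‖)^2 ≤ ((σ - σ_u) * ‖p‖)^2 := by
    have h11 : γ^2 * ‖b + A p + γ⁻¹ • p‖^2 ≤ γ^2 * (2*(L + 1/γ)*εA) :=
      mul_le_mul_of_nonneg_left hGp (sq_nonneg γ)
    have h12 : γ^2 * (2*(L + 1/γ)*εA) = 2*γ*(L*γ+1)*εA := by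
      field_simp
    have hs2 : ((σ - σ_u) * ‖p‖)^2 = s * ‖p‖^2 := by rw [hsdef]; ring
    calc (γ * ‖b + A p + γ⁻¹ • p‖)^2 = γ^2 * ‖b + A p + γ⁻¹ • p‖^2 := by ring
      _ ≤ 2*γ*(L*γ+1)*εA := by rw [← h12]; exact h11
      _ ≤ s * ‖p‖^2 := h6
      _ = ((σ - σ_u) * ‖p‖)^2 := hs2.symm
  have h10' : γ * ‖b + A p + γ⁻¹ • p‖ ≤ (σ - σ_u) * ‖p‖ := by
    have ha : 0 ≤ γ * ‖b + A p + γ⁻¹ • p‖ := by positivity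
    have hb2 : 0 ≤ (σ - σ_u) * ‖p‖ := mul_nonneg hσd.le (norm_nonneg _)
    exact (pow_le_pow_iff_left₀ ha hb2 two_ne_zero).1 h9'
  have hT : ‖gradient f y - b - A p‖ ≤ H/2 * ‖p‖^2 := by
    rw [hbdef, hAdef, hpdef]
    exact aux_taylor hf hH.le hhess xt y
  have hTs : γ * ‖gradient f y - b - A p‖ ≤ σ_u * ‖p‖ := by
    have h13 : γ * (H/2 * ‖p‖^2) = (H/2 * ‖p‖) * (γ * ‖p‖) := by ring
    have h14 : (H/2 * ‖p‖) * (γ * ‖p‖) ≤ (H/2 * ‖p‖) * (2*σ_u/H) :=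
      mul_le_mul_of_nonneg_left hstep (by positivity)
    have h15 : (H/2 * ‖p‖) * (2*σ_u/H) = σ_u * ‖p‖ := by
      field_simp
    have h16 : γ * ‖gradient f y - b - A p‖ ≤ γ * (H/2 * ‖p‖^2) :=
      mul_le_mul_of_nonneg_left hT hγ.le
    linarith [h13, h14, h15, h16]
  have hdecomp : γ • gradient f y + p
      = γ • (gradient f y - b - A p) + γ • (b + A p + γ⁻¹ • p) := by
    rw [← smul_add]
    have h16 : gradient f y - b - A p + (b + A p + γ⁻¹ • p) = gradient f y + γ⁻¹ • p := by
      abel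
    rw [h16, smul_add, smul_smul, mul_inv_cancel₀ hγ', one_smul]
  have hfinal : ‖γ • gradient f y + p‖ ≤ σ * ‖p‖ := by
    rw [hdecomp]
    calc ‖γ • (gradient f y - b - A p) + γ • (b + A p + γ⁻¹ • p)‖
        ≤ ‖γ • (gradient f y - b - A p)‖ + ‖γ • (b + A p + γ⁻¹ • p)‖ := norm_add_le _ _
      _ = γ * ‖gradient f y - b - A p‖ + γ * ‖b + A p + γ⁻¹ • p‖ := by
          rw [norm_smul, norm_smul, Real.norm_eq_abs, abs_of_pos hγ]
      _ ≤ σ_u * ‖p‖ + (σ - σ_u) * ‖p‖ := add_le_add hTs h10'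
      _ = σ * ‖p‖ := by ring
  calc ‖γ • gradient f y + p‖^2 ≤ (σ * ‖p‖)^2 :=
      pow_le_pow_left₀ (norm_nonneg _) hfinal 2
    _ = σ^2 * ‖p‖^2 := by ring
end

section
/- Let b ∈ ℝ^d, let A be a d×d real symmetric matrix, and let M > 0. Define g(h) = ⟨b, h⟩ + ½ hᵀ A h + (M/6)‖h‖³ for h ∈ ℝ^d. Suppose T ∈ ℝ^d is a global minimizer of g over ℝ^d, set r̄ = ‖T‖, and suppose that the matrix A + (M r̄ / 2)·I is positive semidefinite. Then the function h(y) = ⟨b, y⟩ + ½ yᵀ A y + (M r̄ / 4)‖y‖² is convex on ℝ^d and T is a global minimizer of h over ℝ^d. -/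
open scoped RealInnerProductSpace


lemma quad_expand'' (d : ℕ) (A : Matrix (Fin d) (Fin d) ℝ) (x y : EuclideanSpace ℝ (Fin d)) (t : ℝ) :
    dotProduct ((x + t • y : EuclideanSpace ℝ (Fin d)) : Fin d → ℝ)
        (A.mulVec ((x + t • y : EuclideanSpace ℝ (Fin d)) : Fin d → ℝ)) =
      dotProduct (x:Fin d → ℝ) (A.mulVec x)
      + (dotProduct (x:Fin d → ℝ) (A.mulVec y) + dotProduct (y:Fin d → ℝ) (A.mulVec x))*t
      + dotProduct (y:Fin d → ℝ) (A.mulVec y) * t^2 := by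
  rw [WithLp.ofLp_add, WithLp.ofLp_smul, Matrix.mulVec_add, Matrix.mulVec_smul, add_dotProduct,
    smul_dotProduct, dotProduct_add, dotProduct_add]
  simp only [dotProduct_smul, smul_eq_mul]; ring

lemma inner_eq_dot (d : ℕ) (x y : EuclideanSpace ℝ (Fin d)) :
    ⟪x, y⟫ = dotProduct (x : Fin d → ℝ) y := by
  simp [PiLp.inner_apply, dotProduct, RCLike.inner_apply, mul_comm]

lemma dot_symm (d : ℕ) (A : Matrix (Fin d) (Fin d) ℝ) (hA : A.IsSymm) (x y : Fin d → ℝ) :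
    dotProduct x (A.mulVec y) = dotProduct y (A.mulVec x) := by
  rw [Matrix.dotProduct_mulVec, dotProduct_comm, ← Matrix.mulVec_transpose, hA.eq]

lemma stationary (d : ℕ) (b : EuclideanSpace ℝ (Fin d))
    (A : Matrix (Fin d) (Fin d) ℝ) (hA : A.IsSymm) (M : ℝ)
    (g : EuclideanSpace ℝ (Fin d) → ℝ)
    (hg : ∀ z, g z = ⟪b, z⟫ + (1 / 2) * dotProduct z (A.mulVec z) + (M / 6) * ‖z‖ ^ 3)
    (T : EuclideanSpace ℝ (Fin d)) (hT : ∀ z, g T ≤ g z)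
    (v : EuclideanSpace ℝ (Fin d)) :
    ⟪b, v⟫ + dotProduct (T : Fin d → ℝ) (A.mulVec v)
      + (M * ‖T‖ / 2) * dotProduct (T : Fin d → ℝ) v = 0 := by
  set dTT := dotProduct (T : Fin d → ℝ) (A.mulVec T) with hdTT
  set dTv := dotProduct (T : Fin d → ℝ) (A.mulVec v) with hdTv
  set dvT := dotProduct (v : Fin d → ℝ) (A.mulVec T) with hdvT
  set dvv := dotProduct (v : Fin d → ℝ) (A.mulVec v) with hdvv
  set c1 : ℝ := 2 * ⟪T, v⟫ with hc1
  -- the quadratic q t = ‖T + t v‖²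
  have hqval : ∀ t : ℝ, ‖T + t • v‖^2 = ‖T‖^2 + c1*t + ‖v‖^2*t^2 := by
    intro t
    rw [norm_add_sq_real, real_inner_smul_right, norm_smul]
    simp only [Real.norm_eq_abs, mul_pow, sq_abs, hc1]; ring
  have hqnn : ∀ t : ℝ, 0 ≤ ‖T‖^2 + c1*t + ‖v‖^2*t^2 := by
    intro t; rw [← hqval t]; positivity
  have hq : HasDerivAt (fun t : ℝ => ‖T‖^2 + c1*t + ‖v‖^2*t^2) c1 0 := by
    have := ((hasDerivAt_const (0:ℝ) (‖T‖^2)).add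
        ((hasDerivAt_id (0:ℝ)).const_mul c1)).add
        ((hasDerivAt_pow 2 (0:ℝ)).const_mul (‖v‖^2))
    exact this.congr_deriv (by simp)
  have hrpow : HasDerivAt (fun t : ℝ => (‖T‖^2 + c1*t + ‖v‖^2*t^2) ^ ((3:ℝ)/2))
      (c1 * ((3:ℝ)/2) * (‖T‖^2 + c1*0 + ‖v‖^2*0^2) ^ ((3:ℝ)/2 - 1)) 0 := by
    exact hq.rpow_const (Or.inr (by norm_num))
  have pw : ((‖T‖^2 + c1*0 + ‖v‖^2*0^2 : ℝ)) ^ ((3:ℝ)/2 - 1) = ‖T‖ := by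
    have h0 : (‖T‖^2 + c1*0 + ‖v‖^2*0^2 : ℝ) = ‖T‖^2 := by ring
    rw [h0, show (3:ℝ)/2 - 1 = 1/2 by norm_num, ← Real.rpow_natCast ‖T‖ 2,
      ← Real.rpow_mul (norm_nonneg T)]
    norm_num
  rw [pw] at hrpow
  have hcube : ∀ t : ℝ, ‖T + t • v‖^3 = (‖T‖^2 + c1*t + ‖v‖^2*t^2) ^ ((3:ℝ)/2) := by
    intro t
    rw [← hqval t, ← Real.rpow_natCast ‖T + t • v‖ 2, ← Real.rpow_natCast ‖T + t • v‖ 3,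
      ← Real.rpow_mul (norm_nonneg _)]
    norm_num
  -- the explicit function F t = g (T + t v)
  set F : ℝ → ℝ := fun t => (⟪b, T⟫ + ⟪b, v⟫ * t)
      + (1/2) * (dTT + (dTv + dvT)*t + dvv*t^2)
      + (M/6) * ((‖T‖^2 + c1*t + ‖v‖^2*t^2) ^ ((3:ℝ)/2)) with hF
  have hFg : ∀ t : ℝ, F t = g (T + t • v) := by
    intro t
    rw [hF, hg (T + t • v), quad_expand'' d A T v t, ← hdTT, ← hdTv, ← hdvT, ← hdvv,
      hcube t, inner_add_right, real_inner_smul_right]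
    ring
  have hmin : IsLocalMin F 0 := by
    apply Filter.Eventually.of_forall
    intro t
    rw [hFg t, hFg 0]
    have : T + (0:ℝ) • v = T := by simp
    rw [this]
    exact hT _
  have hder : HasDerivAt F (⟪b, v⟫ + (1/2) * (dTv + dvT) + (M/6) * (c1 * ((3:ℝ)/2) * ‖T‖)) 0 := by
    have A1 : HasDerivAt (fun t : ℝ => ⟪b, T⟫ + ⟪b, v⟫ * t) ⟪b, v⟫ 0 := by
      exact ((hasDerivAt_const (0:ℝ) ⟪b, T⟫).add ((hasDerivAt_id (0:ℝ)).const_mul ⟪b, v⟫)).congr_deriv (by simp)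
    have A2 : HasDerivAt (fun t : ℝ => dTT + (dTv + dvT)*t + dvv*t^2) (dTv + dvT) 0 := by
      have := ((hasDerivAt_const (0:ℝ) dTT).add
          ((hasDerivAt_id (0:ℝ)).const_mul (dTv + dvT))).add
          ((hasDerivAt_pow 2 (0:ℝ)).const_mul dvv)
      exact this.congr_deriv (by simp)
    exact (A1.add (A2.const_mul (1/2))).add (hrpow.const_mul (M/6))
  have hL0 := hmin.hasDerivAt_eq_zero hder
  have hsym : dvT = dTv := dot_symm d A hA v T
  have hTv : ⟪T, v⟫ = dotProduct (T : Fin d → ℝ) v := inner_eq_dot d T v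
  rw [hsym, hc1, hTv] at hL0
  linarith [hL0]


lemma quad_expand2 (d : ℕ) (B : Matrix (Fin d) (Fin d) ℝ) (x y : EuclideanSpace ℝ (Fin d)) (a e : ℝ) :
    dotProduct ((a • x + e • y : EuclideanSpace ℝ (Fin d)) : Fin d → ℝ)
        (B.mulVec ((a • x + e • y : EuclideanSpace ℝ (Fin d)) : Fin d → ℝ)) =
      a^2 * dotProduct (x:Fin d → ℝ) (B.mulVec x)
      + a*e*(dotProduct (x:Fin d → ℝ) (B.mulVec y) + dotProduct (y:Fin d → ℝ) (B.mulVec x))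
      + e^2 * dotProduct (y:Fin d → ℝ) (B.mulVec y) := by
  rw [WithLp.ofLp_add, WithLp.ofLp_smul, WithLp.ofLp_smul, Matrix.mulVec_add, Matrix.mulVec_smul, Matrix.mulVec_smul, add_dotProduct,
    smul_dotProduct, smul_dotProduct, dotProduct_add, dotProduct_add]
  simp only [dotProduct_smul, smul_eq_mul]; ring


/-- Let `b ∈ ℝ^d`, `A` a `d×d` real symmetric matrix, `M > 0`, and
`g(h) = ⟨b,h⟩ + ½ hᵀAh + (M/6)‖h‖³`. If `T` is a global minimizer of `g`, `r̄ = ‖T‖`, and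
`A + (M r̄/2) I` is positive semidefinite, then `h(y) = ⟨b,y⟩ + ½ yᵀAy + (M r̄/4)‖y‖²` is
convex on `ℝ^d` and `T` is a global minimizer of `h`. -/
theorem stmt_6 (d : ℕ) (b : EuclideanSpace ℝ (Fin d))
    (A : Matrix (Fin d) (Fin d) ℝ) (hA : A.IsSymm) (M : ℝ) (hM : 0 < M)
    (g : EuclideanSpace ℝ (Fin d) → ℝ)
    (hg : ∀ z, g z = ⟪b, z⟫ + (1 / 2) * dotProduct z (A.mulVec z) + (M / 6) * ‖z‖ ^ 3)
    (T : EuclideanSpace ℝ (Fin d)) (hT : ∀ z, g T ≤ g z)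
    (hpsd : (A + (M * ‖T‖ / 2) • (1 : Matrix (Fin d) (Fin d) ℝ)).PosSemidef)
    (h : EuclideanSpace ℝ (Fin d) → ℝ)
    (hh : ∀ z, h z = ⟪b, z⟫ + (1 / 2) * dotProduct z (A.mulVec z)
        + (M * ‖T‖ / 4) * ‖z‖ ^ 2) :
    ConvexOn ℝ Set.univ h ∧ ∀ z, h T ≤ h z := by
  set c : ℝ := M * ‖T‖ / 2 with hc
  set B : Matrix (Fin d) (Fin d) ℝ := A + c • (1 : Matrix (Fin d) (Fin d) ℝ) with hB
  have hBsymm : B.IsSymm := by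
    rw [hB, Matrix.IsSymm, Matrix.transpose_add, Matrix.transpose_smul, Matrix.transpose_one, hA.eq]
  have hBpsd : ∀ z : EuclideanSpace ℝ (Fin d),
      0 ≤ dotProduct (z : Fin d → ℝ) (B.mulVec z) := by
    intro z
    simpa using hpsd.dotProduct_mulVec_nonneg z
  have hBdot : ∀ z w : EuclideanSpace ℝ (Fin d),
      dotProduct (z : Fin d → ℝ) (B.mulVec w)
        = dotProduct (z : Fin d → ℝ) (A.mulVec w) + c * dotProduct (z:Fin d → ℝ) w := by
    intro z w
    rw [hB, Matrix.add_mulVec, Matrix.smul_mulVec, Matrix.one_mulVec, dotProduct_add]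
    simp [smul_eq_mul]
  have hnormsq : ∀ z : EuclideanSpace ℝ (Fin d),
      ‖z‖^2 = dotProduct (z : Fin d → ℝ) z := by
    intro z; rw [← real_inner_self_eq_norm_sq, inner_eq_dot]
  have hh' : ∀ z, h z = ⟪b, z⟫ + (1/2) * dotProduct (z : Fin d → ℝ) (B.mulVec z) := by
    intro z
    rw [hh z, hBdot, hnormsq, hc]; ring
  have hstat : ∀ v : EuclideanSpace ℝ (Fin d),
      ⟪b, v⟫ + dotProduct (T : Fin d → ℝ) (B.mulVec v) = 0 := by
    intro v
    rw [hBdot]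
    have hs := stationary d b A hA M g hg T hT v
    rw [← hc] at hs
    linarith [hs]
  constructor
  · refine ⟨convex_univ, fun x _ y _ a e ha he hae => ?_⟩
    have hd := hBpsd ((1:ℝ) • x + (-1:ℝ) • y)
    rw [quad_expand2] at hd
    have hsym := dot_symm d B hBsymm x y
    simp only [smul_eq_mul]
    rw [hh' x, hh' y, hh' (a • x + e • y), quad_expand2, inner_add_right,
      real_inner_smul_right, real_inner_smul_right]
    have he' : e = 1 - a := by linarith
    subst he'
    have h1 : (0:ℝ) ≤ (a * (1 - a)) * (dotProduct (x:Fin d → ℝ) (B.mulVec x)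
        - (dotProduct (x:Fin d → ℝ) (B.mulVec y) + dotProduct (y:Fin d → ℝ) (B.mulVec x))
        + dotProduct (y:Fin d → ℝ) (B.mulVec y)) :=
      mul_nonneg (mul_nonneg ha he) (by nlinarith [hd])
    nlinarith [h1]
  · intro z
    have hd := hBpsd ((1:ℝ) • z + (-1:ℝ) • T)
    rw [quad_expand2] at hd
    have hsym := dot_symm d B hBsymm z T
    have h1 := hstat z
    have h2 := hstat T
    have hsz := dot_symm d B hBsymm T z
    rw [hh' z, hh' T]
    nlinarith [hd, h1, h2, hsym]
end

section
/- Let b ∈ ℝ^d with b ≠ 0, let A be a d×d real symmetric matrix, and for M > 0 define g_M(h) = ⟨b, h⟩ + ½ hᵀ A h + (M/6)‖h‖³ for h ∈ ℝ^d. Let M₁ ≥ M₂ > 0 and let T₁ and T₂ be global minimizers over ℝ^d of g_{M₁} and g_{M₂} respectively. Then ‖T₁‖ ≤ ‖T₂‖. -/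
open scoped RealInnerProductSpace

noncomputable def gfun {d : ℕ} (b : EuclideanSpace ℝ (Fin d)) (A : Matrix (Fin d) (Fin d) ℝ)
    (M : ℝ) (z : EuclideanSpace ℝ (Fin d)) : ℝ :=
  ⟪b, z⟫ + (1 / 2) * dotProduct z (A.mulVec z) + (M / 6) * ‖z‖ ^ 3

lemma Qsymm {d : ℕ} (A : Matrix (Fin d) (Fin d) ℝ) (hA : A.IsSymm)
    (x y : Fin d → ℝ) :
    dotProduct x (A.mulVec y) = dotProduct y (A.mulVec x) := by
  rw [Matrix.dotProduct_mulVec, ← Matrix.mulVec_transpose, hA.eq, dotProduct_comm]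

lemma Qpoly {d : ℕ} (A : Matrix (Fin d) (Fin d) ℝ) (hA : A.IsSymm)
    (x u : Fin d → ℝ) (t : ℝ) :
    dotProduct (x + t • u) (A.mulVec (x + t • u)) =
      dotProduct x (A.mulVec x) + 2 * t * dotProduct u (A.mulVec x)
        + t ^ 2 * dotProduct u (A.mulVec u) := by
  have h : dotProduct x (A.mulVec u) = dotProduct u (A.mulVec x) :=
    Qsymm A hA x u
  simp only [Matrix.mulVec_add, add_dotProduct, dotProduct_add,
    Matrix.mulVec_smul, smul_dotProduct, dotProduct_smul, smul_eq_mul]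
  rw [h]
  ring

lemma Qsmul {d : ℕ} (A : Matrix (Fin d) (Fin d) ℝ) (t : ℝ) (x : Fin d → ℝ) :
    dotProduct (t • x) (A.mulVec (t • x)) = t ^ 2 * dotProduct x (A.mulVec x) := by
  simp only [Matrix.mulVec_smul, smul_dotProduct, dotProduct_smul, smul_eq_mul]
  ring

lemma growth {d : ℕ} (b : EuclideanSpace ℝ (Fin d)) (A : Matrix (Fin d) (Fin d) ℝ)
    (hA : A.IsSymm) (M : ℝ) (T : EuclideanSpace ℝ (Fin d))
    (hfoc : ∀ u : EuclideanSpace ℝ (Fin d),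
      ⟪b, u⟫ + dotProduct u (A.mulVec T) + (M * ‖T‖ / 2) * ⟪T, u⟫ = 0)
    (hsoc : ∀ v : EuclideanSpace ℝ (Fin d),
      0 ≤ dotProduct v (A.mulVec v) + (M * ‖T‖ / 2) * ‖v‖ ^ 2)
    (z : EuclideanSpace ℝ (Fin d)) :
    gfun b A M T + (M / 12) * (‖z‖ - ‖T‖) ^ 2 * (2 * ‖z‖ + ‖T‖) ≤ gfun b A M z := by
  have h1 : dotProduct (T + (1:ℝ) • (z - T)) (A.mulVec (T + (1:ℝ) • (z - T) : EuclideanSpace ℝ (Fin d))) =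
      dotProduct T (A.mulVec T) + 2 * 1 * dotProduct (z - T) (A.mulVec T)
        + (1:ℝ) ^ 2 * dotProduct (z - T) (A.mulVec (z - T : EuclideanSpace ℝ (Fin d))) := Qpoly A hA T (z - T) 1
  have h2 : T + (1:ℝ) • (z - T) = z := by rw [one_smul]; abel
  rw [h2] at h1
  have hbz : ⟪b, z⟫ = ⟪b, T⟫ + ⟪b, z - T⟫ := by rw [inner_sub_right]; ring
  have hTv : ⟪T, z - T⟫ = ⟪T, z⟫ - ‖T‖ ^ 2 := by
    rw [inner_sub_right, real_inner_self_eq_norm_sq]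
  have hnv : ‖z - T‖ ^ 2 = ‖z‖ ^ 2 - 2 * ⟪T, z⟫ + ‖T‖ ^ 2 := by
    rw [norm_sub_sq_real, real_inner_comm]
  have hf := hfoc (z - T)
  have hq := hsoc (z - T)
  rw [hnv] at hq
  rw [hTv] at hf
  rw [gfun, gfun, hbz, h1]
  nlinarith [hq, hf]

-- a global minimizer is nonzero when b ≠ 0
lemma min_pos {d : ℕ} (b : EuclideanSpace ℝ (Fin d)) (hb : b ≠ 0)
    (A : Matrix (Fin d) (Fin d) ℝ) (M : ℝ) (hM : 0 < M)
    (T : EuclideanSpace ℝ (Fin d)) (hmin : ∀ z, gfun b A M T ≤ gfun b A M z) :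
    0 < ‖T‖ := by
  rcases eq_or_lt_of_le (norm_nonneg T) with h0 | h
  · exfalso
    have hT : T = 0 := by
      have := h0.symm
      rwa [norm_eq_zero] at this
    have hgT : gfun b A M T = 0 := by
      rw [hT]
      show ⟪b, (0 : EuclideanSpace ℝ (Fin d))⟫ + _ + _ = 0
      have hz : dotProduct (0 : Fin d → ℝ) (A.mulVec (0 : Fin d → ℝ)) = 0 :=
        zero_dotProduct _
      simp [gfun, hz]
    set C₁ : ℝ := (1/2) * dotProduct (b : Fin d → ℝ) (A.mulVec b) with hC₁
    set C : ℝ := |C₁| + (M/6) * ‖b‖^3 with hC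
    have hbpos : 0 < ‖b‖ := norm_pos_iff.mpr hb
    have hCpos : 0 < C + 1 := by positivity
    set t : ℝ := min 1 (‖b‖^2 / (C + 1)) with ht
    have ht0 : 0 < t := lt_min one_pos (by positivity)
    have ht1 : t ≤ 1 := min_le_left _ _
    have ht2 : t * (C + 1) ≤ ‖b‖^2 := by
      rw [← le_div_iff₀ hCpos]
      exact min_le_right _ _
    have hval : gfun b A M ((-t) • b) = -t * ‖b‖^2 + t^2 * C₁ + (M/6) * (t^3 * ‖b‖^3) := by
      unfold gfun
      have h1 : ⟪b, (-t) • b⟫ = -t * ‖b‖^2 := by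
        rw [real_inner_smul_right, real_inner_self_eq_norm_sq]
      have h2 : dotProduct ((-t) • (b : Fin d → ℝ)) (A.mulVec ((-t) • (b : Fin d → ℝ)))
          = t^2 * dotProduct (b : Fin d → ℝ) (A.mulVec b) := by
        rw [Qsmul]; ring
      have h3 : ‖(-t) • b‖ = t * ‖b‖ := by
        rw [norm_smul, Real.norm_eq_abs, abs_neg, abs_of_pos ht0]
      rw [h1, h3]
      show -t * ‖b‖^2 + (1/2) * dotProduct ((-t) • (b : Fin d → ℝ))
        (A.mulVec ((-t) • (b : Fin d → ℝ))) + _ = _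
      rw [h2]
      ring
    have hneg : gfun b A M ((-t) • b) < 0 := by
      rw [hval]
      have hb3 : 0 ≤ (M/6) * ‖b‖^3 := by positivity
      have habs : C₁ ≤ |C₁| := le_abs_self C₁
      have e3' : t * (|C₁| + M/6 * ‖b‖^3) ≤ ‖b‖^2 - t := by
        rw [← hC]; nlinarith
      have h32 : t^3 ≤ t^2 := pow_le_pow_of_le_one ht0.le ht1 (by norm_num)
      nlinarith [mul_le_mul_of_nonneg_left habs (sq_nonneg t),
        mul_le_mul_of_nonneg_right h32 hb3,
        mul_le_mul_of_nonneg_left e3' ht0.le,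
        mul_pos ht0 ht0]
    have := hmin ((-t) • b)
    rw [hgT] at this
    linarith
  · exact h

-- FOC
lemma foc {d : ℕ} (b : EuclideanSpace ℝ (Fin d)) (A : Matrix (Fin d) (Fin d) ℝ)
    (hA : A.IsSymm) (M : ℝ) (T : EuclideanSpace ℝ (Fin d)) (hT0 : ‖T‖ ≠ 0)
    (hmin : ∀ z, gfun b A M T ≤ gfun b A M z) (u : EuclideanSpace ℝ (Fin d)) :
    ⟪b, u⟫ + dotProduct u (A.mulVec T) + (M * ‖T‖ / 2) * ⟪T, u⟫ = 0 := by
  set QT := dotProduct T (A.mulVec T) with hQT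
  set QU := dotProduct u (A.mulVec u) with hQU
  set X := dotProduct u (A.mulVec T) with hX
  -- the function of t
  have hfe : ∀ t : ℝ, gfun b A M (T + t • u) =
      (⟪b, T⟫ + (1/2) * QT) + t * (⟪b, u⟫ + X) + t^2 * ((1/2) * QU)
        + (M/6) * (Real.sqrt (‖T‖^2 + (2 * ⟪T, u⟫) * t + ‖u‖^2 * t^2))^3 := by
    intro t
    have hn : ‖T + t • u‖^2 = ‖T‖^2 + (2 * ⟪T, u⟫) * t + ‖u‖^2 * t^2 := by
      rw [norm_add_sq_real, real_inner_smul_right, norm_smul]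
      simp [mul_pow]
      ring
    have hs : Real.sqrt (‖T‖^2 + (2 * ⟪T, u⟫) * t + ‖u‖^2 * t^2) = ‖T + t • u‖ := by
      rw [← hn, Real.sqrt_sq (norm_nonneg _)]
    rw [hs]
    have hq : dotProduct (T + t • u) (A.mulVec (T + t • u : EuclideanSpace ℝ (Fin d)))
        = QT + 2 * t * X + t^2 * QU := Qpoly A hA T u t
    simp only [gfun, hq, inner_add_right, real_inner_smul_right]
    ring
  set q : ℝ → ℝ := fun t => ‖T‖^2 + (2 * ⟪T, u⟫) * t + ‖u‖^2 * t^2 with hqdef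
  have hq0 : q 0 = ‖T‖^2 := by simp [hqdef]
  have hqd : HasDerivAt q (2 * ⟪T, u⟫) 0 := by
    have h1 : HasDerivAt (fun t : ℝ => ‖T‖^2 + (2 * ⟪T, u⟫) * t + ‖u‖^2 * t^2)
        (0 + (2 * ⟪T, u⟫) * 1 + ‖u‖^2 * (2 * 0^1)) 0 := by
      exact ((hasDerivAt_const _ _).add ((hasDerivAt_id 0).const_mul _)).add
        (((hasDerivAt_pow 2 0)).const_mul _)
    simpa using h1
  have hsd : HasDerivAt (fun t => Real.sqrt (q t)) ((2 * ⟪T, u⟫) / (2 * Real.sqrt (‖T‖^2))) 0 := by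
    have := hqd.sqrt (by rw [hq0]; positivity)
    rwa [hq0] at this
  have hcd : HasDerivAt (fun t => (Real.sqrt (q t))^3)
      (3 * (Real.sqrt (‖T‖^2))^2 * ((2 * ⟪T, u⟫) / (2 * Real.sqrt (‖T‖^2)))) 0 := by
    have := hsd.fun_pow 3
    simpa [hq0] using this
  have hT' : Real.sqrt (‖T‖^2) = ‖T‖ := Real.sqrt_sq (norm_nonneg _)
  have hderiv : HasDerivAt (fun t : ℝ => gfun b A M (T + t • u))
      (⟪b, u⟫ + X + (M * ‖T‖ / 2) * ⟪T, u⟫) 0 := by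
    have h1 : HasDerivAt (fun t : ℝ =>
        (⟪b, T⟫ + (1/2) * QT) + t * (⟪b, u⟫ + X) + t^2 * ((1/2) * QU)
        + (M/6) * (Real.sqrt (q t))^3)
        (0 + 1 * (⟪b, u⟫ + X) + (2 * 0^1) * ((1/2) * QU)
          + (M/6) * (3 * (Real.sqrt (‖T‖^2))^2 * ((2 * ⟪T, u⟫) / (2 * Real.sqrt (‖T‖^2))))) 0 := by
      exact (((hasDerivAt_const _ _).add ((hasDerivAt_id 0).mul_const _)).add
        ((hasDerivAt_pow 2 0).mul_const _)).add (hcd.const_mul _)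
    have h2 : (fun t : ℝ => gfun b A M (T + t • u)) = fun t =>
        (⟪b, T⟫ + (1/2) * QT) + t * (⟪b, u⟫ + X) + t^2 * ((1/2) * QU)
        + (M/6) * (Real.sqrt (q t))^3 := funext hfe
    rw [h2]
    convert h1 using 1
    rw [hT']
    field_simp
    ring
  have hloc : IsLocalMin (fun t : ℝ => gfun b A M (T + t • u)) 0 := by
    apply Filter.Eventually.of_forall
    intro t
    simpa using hmin (T + t • u)
  have := hloc.hasDerivAt_eq_zero hderiv
  linarith [this]

lemma soc {d : ℕ} (b : EuclideanSpace ℝ (Fin d)) (A : Matrix (Fin d) (Fin d) ℝ)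
    (hA : A.IsSymm) (M : ℝ) (T : EuclideanSpace ℝ (Fin d)) (hT0 : 0 < ‖T‖)
    (hmin : ∀ z, gfun b A M T ≤ gfun b A M z)
    (hfoc : ∀ u : EuclideanSpace ℝ (Fin d),
      ⟪b, u⟫ + dotProduct u (A.mulVec T) + (M * ‖T‖ / 2) * ⟪T, u⟫ = 0)
    (v : EuclideanSpace ℝ (Fin d)) :
    0 ≤ dotProduct v (A.mulVec v) + (M * ‖T‖ / 2) * ‖v‖ ^ 2 := by
  have step : ∀ w : EuclideanSpace ℝ (Fin d), ⟪T, w⟫ ≠ 0 →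
      0 ≤ dotProduct w (A.mulVec w) + (M * ‖T‖ / 2) * ‖w‖ ^ 2 := by
    intro w hw
    have hw0 : w ≠ 0 := by rintro rfl; simp at hw
    have hwn : (0:ℝ) < ‖w‖ ^ 2 := pow_pos (norm_pos_iff.mpr hw0) 2
    set t : ℝ := -2 * ⟪T, w⟫ / ‖w‖ ^ 2 with htdef
    have ht : t ≠ 0 := div_ne_zero (by simpa using hw) hwn.ne'
    have hTw : ⟪T, w⟫ = -t * ‖w‖ ^ 2 / 2 := by
      field_simp [htdef]
      rw [htdef, div_mul_cancel₀ _ hwn.ne']; ring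
    set z : EuclideanSpace ℝ (Fin d) := T + t • w with hzdef
    have hnz : ‖z‖ ^ 2 = ‖T‖ ^ 2 := by
      rw [hzdef, norm_add_sq_real, real_inner_smul_right, norm_smul, Real.norm_eq_abs,
        mul_pow, sq_abs, hTw]
      ring
    have hnz' : ‖z‖ = ‖T‖ := by
      have := congrArg Real.sqrt hnz
      rwa [Real.sqrt_sq (norm_nonneg _), Real.sqrt_sq (norm_nonneg _)] at this
    have hQz : dotProduct z (A.mulVec z) =
        dotProduct T (A.mulVec T) + 2 * t * dotProduct w (A.mulVec T)
          + t ^ 2 * dotProduct w (A.mulVec w) := Qpoly A hA T w t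
    have hbz : ⟪b, z⟫ = ⟪b, T⟫ + t * ⟪b, w⟫ := by
      rw [hzdef, inner_add_right, real_inner_smul_right]
    have hge := hmin z
    rw [gfun, gfun, hQz, hbz, hnz'] at hge
    have hf := hfoc w
    -- hge : ... ≤ ... ; extract 0 ≤ t^2/2 * (Qw + (M‖T‖/2)‖w‖²)
    have hf2 : ⟪b, w⟫ + dotProduct w (A.mulVec T) = (M * ‖T‖ / 2) * (t * ‖w‖ ^ 2 / 2) := by
      rw [hTw] at hf
      linarith
    have hf3 : t * (⟪b, w⟫ + dotProduct w (A.mulVec T))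
        = t * ((M * ‖T‖ / 2) * (t * ‖w‖ ^ 2 / 2)) := by rw [hf2]
    have hkey : 0 ≤ (t^2/2) * (dotProduct w (A.mulVec w) + (M * ‖T‖ / 2) * ‖w‖ ^ 2) := by
      nlinarith [hge, hf3]
    have ht2 : 0 < t^2/2 := by positivity
    by_contra hX
    push_neg at hX
    nlinarith [mul_pos ht2 (neg_pos.mpr hX)]
  by_cases hc : ⟪T, v⟫ = 0
  · have key : ∀ ε : ℝ, ε ≠ 0 →
        0 ≤ (dotProduct v (A.mulVec v) + (M * ‖T‖ / 2) * ‖v‖ ^ 2)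
          + ε * (2 * dotProduct T (A.mulVec v))
          + ε ^ 2 * (dotProduct T (A.mulVec T) + (M * ‖T‖ / 2) * ‖T‖ ^ 2) := by
      intro ε hε
      have hTve : ⟪T, v + ε • T⟫ ≠ 0 := by
        rw [inner_add_right, real_inner_smul_right, hc, real_inner_self_eq_norm_sq]
        simp only [zero_add]
        exact mul_ne_zero hε (pow_pos hT0 2).ne'
      have hs := step (v + ε • T) hTve
      have hQ : dotProduct (v + ε • T) (A.mulVec (v + ε • T : EuclideanSpace ℝ (Fin d))) =
          dotProduct v (A.mulVec v) + 2 * ε * dotProduct T (A.mulVec v)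
            + ε ^ 2 * dotProduct T (A.mulVec T) := Qpoly A hA v T ε
      have hn : ‖v + ε • T‖ ^ 2 = ‖v‖ ^ 2 + ε ^ 2 * ‖T‖ ^ 2 := by
        rw [norm_add_sq_real, real_inner_smul_right, real_inner_comm, hc, norm_smul]
        simp [mul_pow]
      rw [hQ, hn] at hs
      nlinarith [hs]
    have cont : Filter.Tendsto (fun ε : ℝ =>
        (dotProduct v (A.mulVec v) + (M * ‖T‖ / 2) * ‖v‖ ^ 2)
          + ε * (2 * dotProduct T (A.mulVec v))
          + ε ^ 2 * (dotProduct T (A.mulVec T) + (M * ‖T‖ / 2) * ‖T‖ ^ 2))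
        (nhdsWithin 0 {(0:ℝ)}ᶜ)
        (nhds (dotProduct v (A.mulVec v) + (M * ‖T‖ / 2) * ‖v‖ ^ 2)) := by
      have hcont : Continuous (fun ε : ℝ =>
          (dotProduct v (A.mulVec v) + (M * ‖T‖ / 2) * ‖v‖ ^ 2)
            + ε * (2 * dotProduct T (A.mulVec v))
            + ε ^ 2 * (dotProduct T (A.mulVec T) + (M * ‖T‖ / 2) * ‖T‖ ^ 2)) := by
        exact (continuous_const.add (continuous_id.mul continuous_const)).add
          ((continuous_pow 2).mul continuous_const)
      have := (hcont.tendsto 0).mono_left (nhdsWithin_le_nhds (s := {(0:ℝ)}ᶜ))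
      simpa using this
    refine ge_of_tendsto cont ?_
    filter_upwards [self_mem_nhdsWithin] with ε hε
    exact key ε hε
  · exact step v hc

/-- Let `b ∈ ℝ^d` with `b ≠ 0`, `A` a `d×d` real symmetric matrix, and for
`M > 0` let `g_M(h) = ⟨b,h⟩ + ½ hᵀAh + (M/6)‖h‖³`. If `M₁ ≥ M₂ > 0` and `T₁, T₂` are global
minimizers of `g_{M₁}` and `g_{M₂}` respectively, then `‖T₁‖ ≤ ‖T₂‖`. -/
theorem stmt_7 (d : ℕ) (b : EuclideanSpace ℝ (Fin d)) (hb : b ≠ 0)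
    (A : Matrix (Fin d) (Fin d) ℝ) (hA : A.IsSymm)
    (M₁ M₂ : ℝ) (hM₂ : 0 < M₂) (hM : M₂ ≤ M₁)
    (g : ℝ → EuclideanSpace ℝ (Fin d) → ℝ)
    (hg : ∀ M z, g M z = ⟪b, z⟫ + (1 / 2) * dotProduct z (A.mulVec z)
        + (M / 6) * ‖z‖ ^ 3)
    (T₁ T₂ : EuclideanSpace ℝ (Fin d))
    (hT₁ : ∀ z, g M₁ T₁ ≤ g M₁ z) (hT₂ : ∀ z, g M₂ T₂ ≤ g M₂ z) :
    ‖T₁‖ ≤ ‖T₂‖ := by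
  have hgf : ∀ N z, g N z = gfun b A N z := fun N z => by rw [hg]; rfl
  have hmin₁ : ∀ z, gfun b A M₁ T₁ ≤ gfun b A M₁ z := fun z => by
    rw [← hgf, ← hgf]; exact hT₁ z
  have hmin₂ : ∀ z, gfun b A M₂ T₂ ≤ gfun b A M₂ z := fun z => by
    rw [← hgf, ← hgf]; exact hT₂ z
  have hs : 0 < ‖T₂‖ := min_pos b hb A M₂ hM₂ T₂ hmin₂
  have hfoc₂ := foc b A hA M₂ T₂ hs.ne' hmin₂
  have hsoc₂ := soc b A hA M₂ T₂ hs hmin₂ hfoc₂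
  have hgrow := growth b A hA M₂ T₂ hfoc₂ hsoc₂ T₁
  have hcmp := hmin₁ T₂
  have hdiff : ∀ x : EuclideanSpace ℝ (Fin d),
      gfun b A M₁ x = gfun b A M₂ x + ((M₁ - M₂) / 6) * ‖x‖ ^ 3 := by
    intro x; unfold gfun; ring
  rw [hdiff, hdiff] at hcmp
  by_contra hlt
  push_neg at hlt
  have h1 : 0 < (‖T₁‖ - ‖T₂‖) ^ 2 * (2 * ‖T₁‖ + ‖T₂‖) :=
    mul_pos (pow_pos (sub_pos.mpr hlt) 2) (by linarith)
  have h2 : ‖T₂‖ ^ 3 ≤ ‖T₁‖ ^ 3 := pow_le_pow_left₀ (norm_nonneg T₂) hlt.le 3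
  have h3 : 0 < M₂ / 12 * ((‖T₁‖ - ‖T₂‖) ^ 2 * (2 * ‖T₁‖ + ‖T₂‖)) :=
    mul_pos (by linarith) h1
  have h4 : 0 ≤ (M₁ - M₂) / 6 * (‖T₁‖ ^ 3 - ‖T₂‖ ^ 3) :=
    mul_nonneg (by linarith) (by linarith)
  nlinarith [hgrow, hcmp, h3, h4]
end

section
/- Let f : ℝ^d → ℝ be twice continuously differentiable with H-Lipschitz continuous Hessian, where H > 0. Fix x ∈ ℝ^d and u > 0, and suppose ỹ ∈ ℝ^d satisfies the first-order stationarity condition ∇f(x) + ∇²f(x)(ỹ − x) + (Hu/2)(ỹ − x) = 0. Then, with r̃ = ‖ỹ − x‖, one has ‖∇f(ỹ)‖ ≤ (H/2) · r̃ · (r̃ + u). -/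
/-- Taylor remainder bound for a function with Lipschitz derivative. -/
theorem taylor_rem {E : Type*} [NormedAddCommGroup E] [NormedSpace ℝ E]
    (g : E → E) (hg : Differentiable ℝ g) (H : ℝ) (hH : 0 ≤ H)
    (hhess : ∀ x y, ‖fderiv ℝ g x - fderiv ℝ g y‖ ≤ H * ‖x - y‖)
    (x y : E) :
    ‖g y - g x - (fderiv ℝ g x) (y - x)‖ ≤ H / 2 * ‖y - x‖ ^ 2 := by
  set v := y - x with hv
  set A0 := fderiv ℝ g x with hA0
  set ψ : ℝ → E := fun t => g (x + t • v) - g x - t • A0 v with hψ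
  have hψ' : ∀ t : ℝ, HasDerivAt ψ ((fderiv ℝ g (x + t • v)) v - A0 v) t := by
    intro t
    have hline : HasDerivAt (fun t : ℝ => x + t • v) v t := by
      simpa using ((hasDerivAt_id t).smul_const v).const_add x
    have h1 : HasDerivAt (fun t : ℝ => g (x + t • v)) ((fderiv ℝ g (x + t • v)) v) t :=
      (hg (x + t • v)).hasFDerivAt.comp_hasDerivAt t hline
    have h2 : HasDerivAt (fun t : ℝ => t • A0 v) (A0 v) t := by
      simpa using (hasDerivAt_id t).smul_const (A0 v)
    exact (h1.sub_const (g x)).sub h2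
  have key : ∀ t ∈ Set.Icc (0:ℝ) 1, ‖ψ t‖ ≤ H * ‖v‖ ^ 2 * t ^ 2 / 2 := by
    intro t ht
    refine image_norm_le_of_norm_deriv_right_le_deriv_boundary
      (f' := fun t => (fderiv ℝ g (x + t • v)) v - A0 v)
      (B := fun t => H * ‖v‖ ^ 2 * t ^ 2 / 2)
      (B' := fun t => H * ‖v‖ ^ 2 * t) ?_ ?_ ?_ ?_ ?_ ht
    · exact fun t _ => (hψ' t).continuousAt.continuousWithinAt
    · exact fun t _ => (hψ' t).hasDerivWithinAt
    · simp [hψ]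
    · intro t
      have : HasDerivAt (fun t : ℝ => H * ‖v‖ ^ 2 * t ^ 2 / 2)
          (H * ‖v‖ ^ 2 * (2 * t) / 2) t := by
        exact (((hasDerivAt_pow 2 t).const_mul (H * ‖v‖ ^ 2)).div_const 2).congr_deriv (by ring_nf)
      simpa using this.congr_deriv (by ring)
    · intro t ht
      have h1 : ‖(fderiv ℝ g (x + t • v)) v - A0 v‖
          ≤ ‖fderiv ℝ g (x + t • v) - A0‖ * ‖v‖ := by
        simpa using (fderiv ℝ g (x + t • v) - A0).le_opNorm v
      have h2 : ‖fderiv ℝ g (x + t • v) - A0‖ ≤ H * (t * ‖v‖) := by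
        have := hhess (x + t • v) x
        simpa [norm_smul, abs_of_nonneg ht.1] using this
      calc ‖(fderiv ℝ g (x + t • v)) v - A0 v‖ ≤ H * (t * ‖v‖) * ‖v‖ :=
            h1.trans (by
              have hH' : 0 ≤ H * (t * ‖v‖) := mul_nonneg hH (mul_nonneg ht.1 (norm_nonneg _))
              exact mul_le_mul_of_nonneg_right h2 (norm_nonneg _))
        _ = H * ‖v‖ ^ 2 * t := by ring
  have h1 := key 1 (by norm_num)
  have : ψ 1 = g y - g x - A0 v := by simp [hψ, hv]
  rw [this] at h1
  calc ‖g y - g x - A0 v‖ ≤ H * ‖v‖ ^ 2 * 1 ^ 2 / 2 := h1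
    _ = H / 2 * ‖v‖ ^ 2 := by ring

/-- Let `f : ℝ^d → ℝ` be twice continuously differentiable with `H`-Lipschitz
continuous Hessian, `H > 0`. Fix `x` and `u > 0`, and suppose `yt` satisfies the first-order
stationarity condition `∇f(x) + ∇²f(x)(yt − x) + (Hu/2)(yt − x) = 0`. Then, with
`r̃ = ‖yt − x‖`, one has `‖∇f(yt)‖ ≤ (H/2)·r̃·(r̃ + u)`. -/
theorem stmt_8 {d : ℕ} (f : EuclideanSpace ℝ (Fin d) → ℝ)
    (hf : ContDiff ℝ 2 f) (H : ℝ) (hH : 0 < H)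
    (hhess : ∀ x y, ‖fderiv ℝ (gradient f) x - fderiv ℝ (gradient f) y‖ ≤ H * ‖x - y‖)
    (x : EuclideanSpace ℝ (Fin d)) (u : ℝ) (hu : 0 < u)
    (yt : EuclideanSpace ℝ (Fin d))
    (hstat : gradient f x + (fderiv ℝ (gradient f) x) (yt - x) + (H * u / 2) • (yt - x) = 0) :
    ‖gradient f yt‖ ≤ H / 2 * ‖yt - x‖ * (‖yt - x‖ + u) := by
  have hg : Differentiable ℝ (gradient f) := by
    have h1 : ContDiff ℝ 1 (fderiv ℝ f) := hf.fderiv_right (by norm_num)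
    have : gradient f = fun y => (InnerProductSpace.toDual ℝ _).symm (fderiv ℝ f y) := rfl
    rw [this]
    exact (((InnerProductSpace.toDual ℝ _).symm.contDiff).comp h1).differentiable one_ne_zero
  have hrem := taylor_rem (gradient f) hg H hH.le hhess x yt
  have hsum : gradient f x + (fderiv ℝ (gradient f) x) (yt - x) = -((H * u / 2) • (yt - x)) := by
    have := hstat
    linear_combination (norm := abel_nf) this
  have hdecomp : gradient f yt =
      (gradient f yt - gradient f x - (fderiv ℝ (gradient f) x) (yt - x))
        + -((H * u / 2) • (yt - x)) := by
    rw [← hsum]; abel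
  calc ‖gradient f yt‖
      ≤ ‖gradient f yt - gradient f x - (fderiv ℝ (gradient f) x) (yt - x)‖
        + ‖-((H * u / 2) • (yt - x))‖ := by nth_rewrite 1 [hdecomp]; apply norm_add_le
    _ ≤ H / 2 * ‖yt - x‖ ^ 2 + (H * u / 2) * ‖yt - x‖ := by
        apply add_le_add hrem
        rw [norm_neg, norm_smul, Real.norm_eq_abs,
          abs_of_nonneg (by positivity : (0:ℝ) ≤ H * u / 2)]
    _ = H / 2 * ‖yt - x‖ * (‖yt - x‖ + u) := by ring
end

section
/- Let M be a d×d real symmetric positive semidefinite matrix whose largest eigenvalue λ₁ equals its spectral norm ‖M‖, let u ∈ ℝ^d be a unit vector with M u = λ₁ u, and let P be a d×d real matrix that is an orthogonal projection (P = Pᵀ and P² = P). If ‖u − Pu‖ ≤ δ for some δ ≥ 0, then uᵀ P M P u ≥ λ₁ (1 − δ − δ²). -/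
/-- Let `M` be a `d×d` real symmetric positive semidefinite matrix whose
largest eigenvalue `lam₁` equals its spectral norm, let `u` be a unit vector with
`M u = lam₁ u`, and let `P` be an orthogonal projection matrix (`P = Pᵀ`, `P² = P`). If
`‖u − Pu‖ ≤ δ` for some `δ ≥ 0`, then `uᵀ P M P u ≥ lam₁ (1 − δ − δ²)`. -/
theorem stmt_9 (d : ℕ) (M : Matrix (Fin d) (Fin d) ℝ) (hM : M.PosSemidef)
    (lam₁ : ℝ) (hnorm : lam₁ = ‖Matrix.toEuclideanCLM (𝕜 := ℝ) M‖)
    (u : EuclideanSpace ℝ (Fin d)) (hu : ‖u‖ = 1) (heig : M.mulVec u = lam₁ • u)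
    (P : Matrix (Fin d) (Fin d) ℝ) (hP : P.IsSymm) (hP2 : P * P = P)
    (δ : ℝ) (hδ : 0 ≤ δ) (hproj : ‖u - (EuclideanSpace.equiv (Fin d) ℝ).symm (P.mulVec u)‖ ≤ δ) :
    lam₁ * (1 - δ - δ ^ 2) ≤ dotProduct u ((P * M * P).mulVec u) := by
  classical
  have hlam : 0 ≤ lam₁ := hnorm ▸ norm_nonneg _
  have hMsym : M.transpose = M := by
    rw [← Matrix.conjTranspose_eq_transpose_of_trivial]; exact hM.1
  have hPsym : P.transpose = P := hP
  set w' : EuclideanSpace ℝ (Fin d) :=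
    u - (EuclideanSpace.equiv (Fin d) ℝ).symm (P.mulVec u) with hw'
  set u0 : Fin d → ℝ := WithLp.ofLp u with hu0
  set v : Fin d → ℝ := P.mulVec u0 with hv
  set w : Fin d → ℝ := u0 - v with hw
  -- generic symmetric-matrix dot product moves
  have hsymdot : ∀ (A : Matrix (Fin d) (Fin d) ℝ), A.transpose = A →
      ∀ x y : Fin d → ℝ,
      dotProduct x (A.mulVec y) = dotProduct (A.mulVec x) y := by
    intro A hA x y
    rw [Matrix.dotProduct_mulVec, ← Matrix.mulVec_transpose, hA]
  have hw'w : ∀ i, w' i = w i := by intro i; simp [hw', hw, hu0]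
  -- w ⬝ w = ‖w'‖ ^ 2
  have hwdot : dotProduct w w = ‖w'‖ ^ 2 := by
    rw [← real_inner_self_eq_norm_sq]
    simp only [dotProduct, PiLp.inner_apply, RCLike.inner_apply, conj_trivial, hw'w]
  -- u ⬝ u = 1
  have hudot : dotProduct u0 u0 = 1 := by
    have h := real_inner_self_eq_norm_sq u
    rw [hu] at h
    simp only [PiLp.inner_apply, RCLike.inner_apply, conj_trivial, one_pow] at h
    simpa [dotProduct, hu0, mul_comm] using h
  -- w ⬝ v = 0
  have hwv : dotProduct w v = 0 := by
    have h1 : dotProduct u0 v = dotProduct v v := by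
      calc dotProduct u0 v
          = dotProduct u0 ((P * P).mulVec u0) := by rw [hP2]
        _ = dotProduct u0 (P.mulVec (P.mulVec u0)) := by
            rw [Matrix.mulVec_mulVec]
        _ = dotProduct (P.mulVec u0) (P.mulVec u0) := by
            rw [hsymdot P hPsym]
        _ = dotProduct v v := rfl
    rw [hw, sub_dotProduct, h1, sub_self]
  -- w ⬝ u = w ⬝ w
  have hwu : dotProduct w u0 = dotProduct w w := by
    have h2 : u0 = w + v := by rw [hw]; ring
    calc dotProduct w u0 = dotProduct w (w + v) := by rw [← h2]
      _ = dotProduct w w + dotProduct w v := dotProduct_add _ _ _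
      _ = dotProduct w w := by rw [hwv, add_zero]
  have hnw : ‖w'‖ ≤ δ := hproj
  -- bounds on w ⬝ u
  have hwu_le : dotProduct w u0 ≤ δ := by
    have hcs := real_inner_le_norm w' u
    have heq : dotProduct w u0 = inner ℝ w' u := by
      simp [dotProduct, PiLp.inner_apply, RCLike.inner_apply, conj_trivial, hw'w, hu0, mul_comm]
    rw [heq]
    calc (inner ℝ w' u : ℝ) ≤ ‖w'‖ * ‖u‖ := hcs
      _ ≤ δ := by rw [hu, mul_one]; exact hnw
  have hwu2_le : dotProduct w u0 ≤ δ ^ 2 := by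
    rw [hwu, hwdot]; nlinarith [norm_nonneg w']
  -- positivity of w ⬝ M w
  have hMw : 0 ≤ dotProduct w (M.mulVec w) := by
    simpa using hM.dotProduct_mulVec_nonneg w
  -- main identity
  have key : dotProduct u0 ((P * M * P).mulVec u0)
      = lam₁ * (1 - 2 * dotProduct w u0) + dotProduct w (M.mulVec w) := by
    have h1 : (P * M * P).mulVec u0 = P.mulVec (M.mulVec v) := by
      rw [← Matrix.mulVec_mulVec, ← Matrix.mulVec_mulVec]
    have h2 : dotProduct u0 ((P * M * P).mulVec u0)
        = dotProduct v (M.mulVec v) := by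
      rw [h1, hsymdot P hPsym]
    have hvw : v = u0 - w := by rw [hw]; ring
    rw [h2, hvw, Matrix.mulVec_sub, sub_dotProduct, dotProduct_sub,
      dotProduct_sub, heig]
    have hMuw : dotProduct u0 (M.mulVec w) = lam₁ * dotProduct w u0 := by
      rw [hsymdot M hMsym, heig, smul_dotProduct, dotProduct_comm,
        smul_eq_mul]
    rw [hMuw, dotProduct_smul, dotProduct_smul, smul_eq_mul, smul_eq_mul,
      hudot, hwu]
    ring
  rw [key]
  nlinarith [hwu, hwu_le, hwu2_le, hMw, hlam]
end

section
/- Let A be a d×d real symmetric positive semidefinite matrix whose eigenvalues, listed with multiplicity in nonincreasing order, are λ₁ ≥ λ₂ ≥ … ≥ λ_d, let μ > 0 with λ_d ≥ μ, and let α > 0 and τ > 0 satisfy Σᵢ₌₁^d λᵢ^α ≤ τ^α. If τ^{α/(1+2α)} · μ^{−α/(1+2α)} ≤ d, then there exists k ∈ {1, …, d} such that k + √(λ_k / μ) ≤ 2 · τ^{α/(1+2α)} · μ^{−α/(1+2α)} + 1. -/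
open scoped BigOperators

/-- Let `A` be a `d×d` real symmetric positive semidefinite matrix whose
eigenvalues, listed with multiplicity in nonincreasing order, are `lam 0 ≥ … ≥ lam (d-1)`,
with `lam i ≥ μ > 0`, and let `α > 0`, `τ > 0` satisfy `∑ᵢ (lam i)^α ≤ τ^α`. If
`τ^{α/(1+2α)} μ^{−α/(1+2α)} ≤ d`, then there exists `k` (1-based index `k+1`) with
`(k+1) + √(lam k / μ) ≤ 2 τ^{α/(1+2α)} μ^{−α/(1+2α)} + 1`. -/
theorem stmt_12 (d : ℕ) (A : Matrix (Fin d) (Fin d) ℝ) (hA : A.PosSemidef)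
    (lam : Fin d → ℝ)
    (hperm : ∃ σ : Equiv.Perm (Fin d), lam = hA.1.eigenvalues ∘ σ)
    (hsort : Antitone lam)
    (μ : ℝ) (hμ : 0 < μ) (hμle : ∀ i, μ ≤ lam i)
    (α τ : ℝ) (hα : 0 < α) (hτ : 0 < τ)
    (hdeg : ∑ i, lam i ^ α ≤ τ ^ α)
    (hd : τ ^ (α / (1 + 2 * α)) * μ ^ (-(α / (1 + 2 * α))) ≤ (d : ℝ)) :
    ∃ k : Fin d, ((k : ℕ) + 1 : ℝ) + Real.sqrt (lam k / μ)
      ≤ 2 * τ ^ (α / (1 + 2 * α)) * μ ^ (-(α / (1 + 2 * α))) + 1 := by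
  set β := α / (1 + 2 * α) with hβdef
  have h2α : (0:ℝ) < 1 + 2 * α := by linarith
  have hβ : 0 < β := div_pos hα h2α
  set x : ℝ := τ / μ with hxdef
  have hx : 0 < x := div_pos hτ hμ
  have hTeq : τ ^ β * μ ^ (-β) = x ^ β := by
    rw [hxdef, Real.div_rpow hτ.le hμ.le, Real.rpow_neg hμ.le, div_eq_mul_inv]
  set T : ℝ := x ^ β with hTdef
  have hT : 0 < T := Real.rpow_pos_of_pos hx β
  rw [mul_assoc, hTeq]
  rw [hTeq] at hd
  -- d ≥ 1
  have hd1 : 1 ≤ d := by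
    by_contra h
    push_neg at h
    interval_cases d
    · simp at hd; linarith
  -- τ ≥ μ, hence x ≥ 1, T ≥ 1
  have hτμ : μ ≤ τ := by
    by_contra h
    push_neg at h
    have h0 : (⟨0, hd1⟩ : Fin d) = ⟨0, hd1⟩ := rfl
    have hle : μ ^ α ≤ ∑ i, lam i ^ α := by
      have := Finset.single_le_sum (f := fun i => lam i ^ α)
        (fun i _ => Real.rpow_nonneg (le_trans hμ.le (hμle i)) α)
        (Finset.mem_univ (⟨0, hd1⟩ : Fin d))
      exact le_trans (Real.rpow_le_rpow hμ.le (hμle _) hα.le) this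
    have := (Real.rpow_lt_rpow hτ.le h hα).trans_le (le_trans hle hdeg)
    exact lt_irrefl _ this
  have hx1 : 1 ≤ x := (one_le_div hμ).mpr hτμ
  have hT1 : 1 ≤ T := Real.one_le_rpow hx1 hβ.le
  -- k = ⌈T⌉
  set k : ℕ := ⌈T⌉₊ with hkdef
  have hk1 : 1 ≤ k := Nat.one_le_ceil_iff.mpr hT
  have hkd : k ≤ d := by
    have := Nat.ceil_le.mpr (le_trans hd (by exact_mod_cast le_refl (d:ℝ)))
    exact_mod_cast Nat.ceil_le.mpr hd
  have hkT : T ≤ (k : ℝ) := Nat.le_ceil T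
  have hkT1 : (k : ℝ) ≤ T + 1 := (Nat.ceil_lt_add_one hT.le).le
  refine ⟨⟨k - 1, by omega⟩, ?_⟩
  set k0 : Fin d := ⟨k - 1, by omega⟩ with hk0def
  -- key: (k:ℝ) * lam k0 ^ α ≤ τ ^ α
  have hlpos : ∀ i, 0 < lam i := fun i => lt_of_lt_of_le hμ (hμle i)
  have hkey : (k : ℝ) * lam k0 ^ α ≤ τ ^ α := by
    have hcard : (Finset.Iic k0).card = k := by
      rw [Fin.card_Iic]; simp [hk0def]; omega
    have hsum : (Finset.Iic k0).card • (lam k0 ^ α) ≤ ∑ i ∈ Finset.Iic k0, lam i ^ α := by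
      refine Finset.card_nsmul_le_sum _ _ _ ?_
      intro i hi
      exact Real.rpow_le_rpow (hlpos k0).le (hsort (Finset.mem_Iic.mp hi)) hα.le
    have hsub : ∑ i ∈ Finset.Iic k0, lam i ^ α ≤ ∑ i, lam i ^ α := by
      refine Finset.sum_le_sum_of_subset_of_nonneg (Finset.subset_univ _) ?_
      intro i _ _
      exact Real.rpow_nonneg (hlpos i).le α
    rw [hcard, nsmul_eq_mul] at hsum
    exact le_trans hsum (le_trans hsub hdeg)
  -- hence lam k0 ≤ μ * T^2
  have hmain : lam k0 ≤ μ * T ^ 2 := by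
    have h1 : T * lam k0 ^ α ≤ τ ^ α :=
      le_trans (mul_le_mul_of_nonneg_right hkT (Real.rpow_nonneg (hlpos k0).le α)) hkey
    have hT2 : μ * T ^ 2 = μ * x ^ (2 * β) := by
      rw [pow_two, hTdef, ← Real.rpow_add hx]; rw [two_mul]
    have hiden : τ ^ α = T * (μ * x ^ (2 * β)) ^ α := by
      have hτx : τ = μ * x := by rw [hxdef]; field_simp
      rw [hτx, Real.mul_rpow hμ.le hx.le,
        Real.mul_rpow hμ.le (Real.rpow_pos_of_pos hx _).le, hTdef,
        ← Real.rpow_mul hx.le]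
      rw [mul_comm (x ^ β), mul_assoc, ← Real.rpow_add hx]
      congr 2
      rw [hβdef]
      field_simp
      ring
    rw [hiden] at h1
    have h2 : lam k0 ^ α ≤ (μ * x ^ (2 * β)) ^ α := (mul_le_mul_iff_right₀ hT).mp h1
    rw [hT2]
    exact (Real.rpow_le_rpow_iff (hlpos k0).le (by positivity) hα).mp h2
  have hsqrt : Real.sqrt (lam k0 / μ) ≤ T := by
    have hq : lam k0 / μ ≤ T ^ 2 := (div_le_iff₀ hμ).mpr (by linarith)
    calc Real.sqrt (lam k0 / μ) ≤ Real.sqrt (T ^ 2) := Real.sqrt_le_sqrt hq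
      _ = T := Real.sqrt_sq hT.le
  have hcast : ((k0 : ℕ) + 1 : ℝ) = (k : ℝ) := by
    have : (k0 : ℕ) = k - 1 := rfl
    rw [this, Nat.cast_sub hk1]
    ring
  rw [hcast]
  linarith
end

section
/- Let A be a d×d real symmetric matrix with smallest eigenvalue λ_min(A), let H, ε, c₁, c₂ > 0, and let λ ∈ ℝ satisfy |λ − λ_min(A)| ≤ (c₁/2)·√(εH). If r ∈ ℝ satisfies r ≥ max{0, −2λ/H} + (5c₁ + 2c₂)·√(ε/H), then A + (Hr/2)·I − (2c₁ + c₂)·√(εH)·I is positive semidefinite; in particular A + (Hr/2)·I ⪰ c₂·√(εH)·I. -/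
/-- A Hermitian real matrix minus a lower bound on its eigenvalues (times identity)
is positive semidefinite. -/
lemma aux_sub_smul_posSemidef (d : ℕ) (A : Matrix (Fin d) (Fin d) ℝ) (hA : A.IsHermitian)
    (c : ℝ) (h : ∀ i, c ≤ hA.eigenvalues i) : (A - c • (1 : Matrix (Fin d) (Fin d) ℝ)).PosSemidef := by
  have hU := (Matrix.mem_unitaryGroup_iff).mp (hA.eigenvectorUnitary).2
  have hdecomp : A - c • (1 : Matrix (Fin d) (Fin d) ℝ)
      = (hA.eigenvectorUnitary : Matrix (Fin d) (Fin d) ℝ)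
        * Matrix.diagonal (fun i => hA.eigenvalues i - c)
        * star (hA.eigenvectorUnitary : Matrix (Fin d) (Fin d) ℝ) := by
    have hd : Matrix.diagonal (fun i => hA.eigenvalues i - c)
        = Matrix.diagonal (RCLike.ofReal ∘ hA.eigenvalues) - c • (1 : Matrix (Fin d) (Fin d) ℝ) := by
      ext i j
      by_cases hij : i = j <;> simp [hij, Matrix.one_apply]
    rw [hd, Matrix.mul_sub, Matrix.sub_mul, Matrix.mul_smul, Matrix.smul_mul, mul_one, hU,
      ← Unitary.conjStarAlgAut_apply (S := ℝ), ← hA.spectral_theorem]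
  rw [hdecomp, Matrix.star_eq_conjTranspose]
  exact (Matrix.posSemidef_diagonal_iff.mpr fun i => sub_nonneg.mpr (h i)).mul_mul_conjTranspose_same _

/-- Let `A` be a `d×d` real symmetric matrix with smallest eigenvalue
`lmin`, let `H, ε, c₁, c₂ > 0`, and let `lam` satisfy `|lam − lmin| ≤ (c₁/2)√(εH)`. If
`r ≥ max{0, −2·lam/H} + (5c₁ + 2c₂)√(ε/H)`, then `A + (Hr/2)I − (2c₁ + c₂)√(εH) I` is
positive semidefinite; in particular `A + (Hr/2)I ⪰ c₂√(εH) I`. -/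
theorem stmt_13 (d : ℕ) (A : Matrix (Fin d) (Fin d) ℝ) (hA : A.IsHermitian)
    (H ε c₁ c₂ : ℝ) (hH : 0 < H) (hε : 0 < ε) (hc₁ : 0 < c₁) (hc₂ : 0 < c₂)
    (lmin : ℝ) (hlmin₁ : ∀ i, lmin ≤ hA.eigenvalues i) (hlmin₂ : ∃ i, hA.eigenvalues i = lmin)
    (lam : ℝ) (hlam : |lam - lmin| ≤ c₁ / 2 * Real.sqrt (ε * H))
    (r : ℝ) (hr : max 0 (-(2 * lam) / H) + (5 * c₁ + 2 * c₂) * Real.sqrt (ε / H) ≤ r) :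
    (A + (H * r / 2) • (1 : Matrix (Fin d) (Fin d) ℝ)
        - ((2 * c₁ + c₂) * Real.sqrt (ε * H)) • (1 : Matrix (Fin d) (Fin d) ℝ)).PosSemidef ∧
    (A + (H * r / 2) • (1 : Matrix (Fin d) (Fin d) ℝ)
        - (c₂ * Real.sqrt (ε * H)) • (1 : Matrix (Fin d) (Fin d) ℝ)).PosSemidef := by
  set S := Real.sqrt (ε * H) with hS
  have hS0 : 0 < S := Real.sqrt_pos.mpr (by positivity)
  have hkey : H * Real.sqrt (ε / H) = S := by
    rw [hS, show ε / H = ε * H / H ^ 2 by field_simp,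
      Real.sqrt_div (by positivity), Real.sqrt_sq hH.le]
    field_simp
  -- scalar inequality
  have habs := abs_le.mp hlam
  have hmain : (2 * c₁ + c₂) * S ≤ lmin + H * r / 2 := by
    rcases le_or_gt 0 lam with hl | hl
    · have hmax : max 0 (-(2 * lam) / H) = 0 := by
        apply max_eq_left
        apply div_nonpos_of_nonpos_of_nonneg <;> linarith
      rw [hmax, zero_add] at hr
      have h1 : H * ((5 * c₁ + 2 * c₂) * Real.sqrt (ε / H)) ≤ H * r :=
        mul_le_mul_of_nonneg_left hr hH.le
      have hexp : H * ((5 * c₁ + 2 * c₂) * Real.sqrt (ε / H)) = (5 * c₁ + 2 * c₂) * S := by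
        rw [show H * ((5 * c₁ + 2 * c₂) * Real.sqrt (ε / H))
            = (5 * c₁ + 2 * c₂) * (H * Real.sqrt (ε / H)) by ring, hkey]
      linarith [habs.2]
    · have hmax : max 0 (-(2 * lam) / H) = -(2 * lam) / H := by
        apply max_eq_right
        apply div_nonneg (by linarith) hH.le
      rw [hmax] at hr
      have h1 : H * (-(2 * lam) / H + (5 * c₁ + 2 * c₂) * Real.sqrt (ε / H)) ≤ H * r :=
        mul_le_mul_of_nonneg_left hr hH.le
      have h2 : H * (-(2 * lam) / H) = -(2 * lam) := by field_simp
      have hexp : H * (-(2 * lam) / H + (5 * c₁ + 2 * c₂) * Real.sqrt (ε / H))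
          = -(2 * lam) + (5 * c₁ + 2 * c₂) * S := by
        rw [mul_add, h2, show H * ((5 * c₁ + 2 * c₂) * Real.sqrt (ε / H))
            = (5 * c₁ + 2 * c₂) * (H * Real.sqrt (ε / H)) by ring, hkey]
      linarith [habs.2]
  constructor
  · have h1 : A + (H * r / 2) • (1 : Matrix (Fin d) (Fin d) ℝ)
        - ((2 * c₁ + c₂) * S) • (1 : Matrix (Fin d) (Fin d) ℝ)
        = A - ((2 * c₁ + c₂) * S - H * r / 2) • (1 : Matrix (Fin d) (Fin d) ℝ) := by
      rw [sub_smul]; abel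
    rw [h1]
    exact aux_sub_smul_posSemidef d A hA _ (fun i => by linarith [hlmin₁ i])
  · have h1 : A + (H * r / 2) • (1 : Matrix (Fin d) (Fin d) ℝ)
        - (c₂ * S) • (1 : Matrix (Fin d) (Fin d) ℝ)
        = A - (c₂ * S - H * r / 2) • (1 : Matrix (Fin d) (Fin d) ℝ) := by
      rw [sub_smul]; abel
    rw [h1]
    refine aux_sub_smul_posSemidef d A hA _ (fun i => by nlinarith [hlmin₁ i, hS0])
end
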